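/- arXiv:1802.09588 — 7 statements merged into one kernel-verified Lean document; each statement's English description precedes it below -/
import Mathlib

section
/- Let d ≥ 1, n ≥ 1 and N ≥ 2n+1 be integers, let p be a d-variate trigonometric polynomial of degree at most n, and set α = 2n/N. Then for every θ ∈ ℝ^d, |p(θ)| ≤ (1 − α)^{−d/2} · max_{θ_k ∈ Θ_N^d} |p(θ_k)|. -/
open Finset Complex Real

noncomputable def cexpI (x : ℝ) : ℂ := Complex.exp (Complex.I * x)

lemma cexpI_zero : cexpI 0 = 1 := by
  unfold cexpI; simp

lemma cexpI_zpow (j : ℤ) (x : ℝ) : cexpI (j * x) = (cexpI x) ^ j := by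
  unfold cexpI
  rw [← Complex.exp_int_mul]
  push_cast
  ring_nf

lemma cexpI_npow (j : ℕ) (x : ℝ) : cexpI (j * x) = (cexpI x) ^ j := by
  have := cexpI_zpow (j : ℤ) x
  push_cast at this
  simpa using this

lemma cexpI_ne_zero (x : ℝ) : cexpI x ≠ 0 := Complex.exp_ne_zero _

lemma cexpI_add (x y : ℝ) : cexpI (x + y) = cexpI x * cexpI y := by
  unfold cexpI; rw [← Complex.exp_add]; push_cast; ring_nf

lemma abs_cexpI (x : ℝ) : ‖cexpI x‖ = 1 := by
  unfold cexpI
  rw [mul_comm]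
  exact Complex.norm_exp_ofReal_mul_I x

lemma conj_cexpI (x : ℝ) : (starRingEnd ℂ) (cexpI x) = cexpI (-x) := by
  unfold cexpI
  rw [← Complex.exp_conj]
  congr 1
  push_cast
  simp [Complex.conj_I]

lemma cexpI_int_two_pi (c : ℤ) : cexpI (c * (2 * π)) = 1 := by
  unfold cexpI
  rw [show (Complex.I * ((c:ℝ) * (2*π) : ℝ) : ℂ) = (c:ℤ) * (2 * (π:ℂ) * Complex.I) by
    push_cast; ring]
  exact Complex.exp_int_mul_two_pi_mul_I c

/-- grid sum: roots of unity filter -/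
lemma sum_cexpI_grid (N : ℕ) (hN : 0 < N) (j : ℤ) :
    ∑ k : Fin N, cexpI (j * (2 * π * k / N)) = if (N:ℤ) ∣ j then (N:ℂ) else 0 := by
  have hNR : (N:ℝ) ≠ 0 := Nat.cast_ne_zero.mpr hN.ne'
  have key : ∀ k : Fin N, cexpI (j * (2 * π * k / N)) = (cexpI (j * (2*π) / N)) ^ (k:ℕ) := by
    intro k
    rw [← cexpI_npow]
    congr 1
    field_simp
  simp_rw [key]
  rw [Fin.sum_univ_eq_sum_range]
  by_cases hdvd : (N:ℤ) ∣ j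
  · obtain ⟨c, rfl⟩ := hdvd
    have h1 : cexpI (((N:ℤ) * c : ℤ) * (2*π) / N) = 1 := by
      rw [show (((N:ℤ) * c : ℤ):ℝ) * (2*π) / N = (c : ℝ) * (2 * π) by
        push_cast; field_simp]
      exact_mod_cast cexpI_int_two_pi c
    rw [h1]
    simp only [one_pow, Finset.sum_const, Finset.card_range, nsmul_eq_mul, mul_one]
    rw [if_pos ⟨c, rfl⟩]
  · have hNpow : (cexpI (j * (2*π) / N)) ^ N = 1 := by
      rw [← cexpI_npow]
      rw [show ((N:ℕ):ℝ) * ((j:ℝ) * (2*π) / N) = (j:ℝ) * (2*π) by field_simp]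
      exact_mod_cast cexpI_int_two_pi j
    have hz1 : cexpI (j * (2*π) / N) ≠ 1 := by
      intro h
      apply hdvd
      unfold cexpI at h
      rw [Complex.exp_eq_one_iff] at h
      obtain ⟨c, hc⟩ := h
      have h2 : (((j:ℝ) * (2*π) / N : ℝ) : ℂ) = (c:ℂ) * (2*π) := by
        have hI : (Complex.I : ℂ) ≠ 0 := Complex.I_ne_zero
        apply mul_left_cancel₀ hI
        rw [hc]; ring
      have h3 : (j:ℝ) * (2*π) / N = (c:ℝ) * (2*π) := by exact_mod_cast h2
      have hpi : (2*π) ≠ 0 := by positivity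
      have h3' : (j:ℝ) * (2*π) = ((N:ℝ) * c) * (2*π) := by
        field_simp at h3
        rw [h3]
      have h5 : (j:ℝ) = (N:ℝ) * c := mul_right_cancel₀ hpi h3'
      exact ⟨c, by exact_mod_cast h5⟩
    rw [geom_sum_eq hz1, hNpow]
    simp [hdvd]

noncomputable def expSum (q : ℕ) (t : ℝ) : ℂ := ∑ a ∈ Finset.range q, cexpI (a * t)

lemma sum_abs_sq_expSum (N q : ℕ) (hN : 0 < N) (hq : q ≤ N) (θ : ℝ) :
    ∑ k : Fin N, (‖expSum q (θ - 2*π*k/N)‖)^2 = (N : ℝ) * q := by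
  have habs : ∀ z : ℂ, ((‖z‖)^2 : ℂ) = z * (starRingEnd ℂ) z := by
    intro z
    rw [Complex.mul_conj]
    norm_cast
    rw [Complex.sq_norm]
  have key : ∀ k : Fin N, ((‖expSum q (θ - 2*π*k/N)‖)^2 : ℂ)
      = ∑ a ∈ Finset.range q, ∑ b ∈ Finset.range q,
          cexpI ((((a:ℤ)-(b:ℤ) : ℤ) : ℝ) * θ) *
            cexpI ((((b:ℤ)-(a:ℤ) : ℤ) : ℝ) * (2*π*k/N)) := by
    intro k
    rw [habs]
    unfold expSum
    rw [map_sum, Finset.sum_mul_sum]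
    apply Finset.sum_congr rfl; intro a _
    apply Finset.sum_congr rfl; intro b _
    rw [conj_cexpI, ← cexpI_add, ← cexpI_add]
    congr 1
    push_cast
    ring
  have main : ∑ k : Fin N, ((‖expSum q (θ - 2*π*k/N)‖)^2 : ℂ) = ((N:ℂ) * q) := by
    simp_rw [key]
    rw [Finset.sum_comm]
    rw [Finset.sum_congr rfl (fun a _ => Finset.sum_comm)]
    have inner : ∀ a ∈ Finset.range q, (∑ b ∈ Finset.range q, ∑ k : Fin N,
        cexpI ((((a:ℤ)-(b:ℤ) : ℤ) : ℝ) * θ) * cexpI ((((b:ℤ)-(a:ℤ) : ℤ) : ℝ) * (2*π*k/N)))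
        = (N:ℂ) := by
      intro a ha
      have hswap : ∀ b : ℕ, (∑ k : Fin N,
          cexpI ((((a:ℤ)-(b:ℤ) : ℤ) : ℝ) * θ) * cexpI ((((b:ℤ)-(a:ℤ) : ℤ) : ℝ) * (2*π*k/N)))
          = cexpI ((((a:ℤ)-(b:ℤ) : ℤ) : ℝ) * θ) *
              ∑ k : Fin N, cexpI ((((b:ℤ)-(a:ℤ) : ℤ) : ℝ) * (2*π*k/N)) := by
        intro b; rw [Finset.mul_sum]
      have inner2 : ∀ b ∈ Finset.range q, (∑ k : Fin N,
          cexpI ((((a:ℤ)-(b:ℤ) : ℤ) : ℝ) * θ) * cexpI ((((b:ℤ)-(a:ℤ) : ℤ) : ℝ) * (2*π*k/N)))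
          = if b = a then (N:ℂ) else 0 := by
        intro b hb
        rw [hswap b, sum_cexpI_grid N hN]
        have hiff : ((N:ℤ) ∣ ((b:ℤ)-(a:ℤ))) ↔ b = a := by
          constructor
          · intro h
            have ha' := Finset.mem_range.mp ha
            have hb' := Finset.mem_range.mp hb
            have habs' : |(b:ℤ)-(a:ℤ)| < N := abs_lt.mpr (by omega)
            have := Int.eq_zero_of_abs_lt_dvd h habs'
            omega
          · rintro rfl; simp
        by_cases hab : b = a
        · rw [if_pos (hiff.mpr hab)]
          subst hab
          simp [sub_self, cexpI_zero]
        · rw [if_neg (fun h => hab (hiff.mp h)), if_neg hab]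
          simp
      rw [Finset.sum_congr rfl inner2]
      rw [Finset.sum_ite_eq' (Finset.range q) a fun _ => (N:ℂ)]
      rw [if_pos ha]
    rw [Finset.sum_congr rfl inner, Finset.sum_const, Finset.card_range]
    push_cast
    ring
  have : ((∑ k : Fin N, (‖expSum q (θ - 2*π*k/N)‖)^2 : ℝ) : ℂ) = ((N:ℝ) * q : ℝ) := by
    push_cast
    exact main
  exact_mod_cast this

/-- The uniform sampling grid point in `[0, 2π]^d` indexed by `k ∈ {0,…,N−1}^d`. -/
noncomputable def trigGrid (N : ℕ) {d : ℕ} (k : Fin d → Fin N) : Fin d → ℝ :=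
  fun i => 2 * Real.pi * (k i : ℝ) / N

/-- `p : ℝ^d → ℂ` is a `d`-variate trigonometric polynomial of degree at most `n`. -/
noncomputable def IsTrigPoly (d n : ℕ) (p : (Fin d → ℝ) → ℂ) : Prop :=
  ∃ c : (Fin d → ℤ) → ℂ, ∀ θ : Fin d → ℝ,
    p θ = ∑ k ∈ Fintype.piFinset (fun _ : Fin d => Finset.Icc (-(n : ℤ)) (n : ℤ)),
      c k * Complex.exp (Complex.I * ((∑ i, (k i : ℝ) * θ i : ℝ) : ℂ))

/-- The univariate Dirichlet kernel `D_l(t) = Σ_{k=−l}^{l} exp(i k t)`. -/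
noncomputable def dirichletKer (l : ℕ) (t : ℝ) : ℂ :=
  ∑ k ∈ Finset.Icc (-(l : ℤ)) (l : ℤ), Complex.exp (Complex.I * (k : ℂ) * (t : ℂ))

/-- The univariate de la Vallée-Poussin kernel `D_{n,m}(t) = (1/(m−n)) Σ_{l=n}^{m−1} D_l(t)`. -/
noncomputable def vpKer (n m : ℕ) (t : ℝ) : ℂ :=
  (1 / ((m : ℂ) - (n : ℂ))) * ∑ l ∈ Finset.Ico n m, dirichletKer l t

lemma helper1 (l : ℕ) (z : ℂ) (hz : z ≠ 0) :
    ∑ j ∈ Finset.Icc (-(l:ℤ)) (l:ℤ), z ^ j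
      = z ^ (-(l:ℤ)) * ∑ i ∈ Finset.range (2*l+1), z ^ i := by
  rw [Finset.mul_sum]
  apply Finset.sum_nbij' (i := fun (j : ℤ) => (j + l).toNat) (j := fun (i : ℕ) => (i : ℤ) - l)
  · intro a ha
    simp only [Finset.mem_Icc] at ha
    simp only [Finset.mem_range]
    omega
  · intro a ha
    simp only [Finset.mem_range] at ha
    simp only [Finset.mem_Icc]
    omega
  · intro a ha
    simp only [Finset.mem_Icc] at ha
    omega
  · intro a ha
    omega
  · intro a ha
    simp only [Finset.mem_Icc] at ha
    rw [← zpow_natCast z ((a + l).toNat)]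
    rw [← zpow_add₀ hz]
    congr 1
    omega

lemma sum_odd_nat (m : ℕ) : ∑ l ∈ Finset.range m, (2*l+1) = m*m := by
  induction m with
  | zero => simp
  | succ k ih => rw [Finset.sum_range_succ, ih]; ring

lemma sum_odd_aux (n : ℕ) : ∀ L : ℕ, ∑ i ∈ Finset.range L, (2*(n+i)+1) = (2*n+L)*L := by
  intro L
  induction L with
  | zero => simp
  | succ k ih => rw [Finset.sum_range_succ, ih]; ring

lemma sum_odd_Ico (n m : ℕ) (h : n ≤ m) : ∑ l ∈ Finset.Ico n m, (2*l+1) = (m+n)*(m-n) := by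
  rw [Finset.sum_Ico_eq_sum_range, sum_odd_aux]
  obtain ⟨L, rfl⟩ : ∃ L, m = n + L := ⟨m - n, by omega⟩
  have : n + L - n = L := by omega
  rw [this]
  ring

lemma vp_core (n m : ℕ) (h : n < m) (z : ℂ) (hz : z ≠ 0) :
    (∑ l ∈ Finset.Ico n m, ∑ j ∈ Finset.Icc (-(l:ℤ)) (l:ℤ), z ^ j) * z ^ (m-1 : ℕ)
      = (∑ a ∈ Finset.range (m+n), z ^ a) * (∑ b ∈ Finset.range (m-n), z ^ b) := by
  by_cases hz1 : z = 1
  · subst hz1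
    simp only [one_zpow, one_pow, Finset.sum_const, nsmul_eq_mul, mul_one,
      Finset.card_range, Int.card_Icc]
    have : ∀ l ∈ Finset.Ico n m, ((Int.toNat ((l:ℤ) + 1 - -(l:ℤ)) : ℕ) : ℂ) = ((2*l+1 : ℕ) : ℂ) := by
      intro l _
      congr 1
      omega
    rw [Finset.sum_congr rfl this, ← Nat.cast_sum, sum_odd_Ico n m h.le]
    push_cast
    ring
  · -- z ≠ 1
    have key : ∀ l ∈ Finset.Ico n m,
        (∑ j ∈ Finset.Icc (-(l:ℤ)) (l:ℤ), z ^ j) * z ^ (m-1 : ℕ)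
          = z ^ (m-1-l : ℕ) * ∑ i ∈ Finset.range (2*l+1), z ^ i := by
      intro l hl
      simp only [Finset.mem_Ico] at hl
      rw [helper1 l z hz]
      have : z ^ (-(l:ℤ)) * z ^ ((m-1 : ℕ) : ℤ) = z ^ ((m-1-l : ℕ) : ℤ) := by
        rw [← zpow_add₀ hz]
        congr 1
        omega
      rw [mul_assoc, mul_comm (∑ i ∈ Finset.range (2*l+1), z ^ i), ← mul_assoc, ← zpow_natCast z (m-1),
        this, zpow_natCast]
    rw [Finset.sum_mul, Finset.sum_congr rfl key]
    -- now reindex Ico to range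
    rw [Finset.sum_Ico_eq_sum_range]
    have geo : ∀ q : ℕ, ∑ i ∈ Finset.range q, z ^ i = (z ^ q - 1)/(z-1) := fun q => geom_sum_eq hz1 q
    have hzm1 : z - 1 ≠ 0 := sub_ne_zero.mpr hz1
    have step : ∀ i ∈ Finset.range (m-n),
        z ^ (m-1-(n+i)) * ∑ j ∈ Finset.range (2*(n+i)+1), z ^ j
          = (z ^ (m+n) * z^i - z ^ ((m-n)-1-i)) / (z-1) := by
      intro i hi
      simp only [Finset.mem_range] at hi
      rw [geo]
      rw [mul_div_assoc']
      congr 1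
      rw [mul_sub, mul_one, ← pow_add, ← pow_add]
      congr 2
      · omega
      · omega
    rw [Finset.sum_congr rfl step, ← Finset.sum_div]
    rw [Finset.sum_sub_distrib]
    have refl : ∑ i ∈ Finset.range (m-n), z ^ ((m-n)-1-i) = ∑ i ∈ Finset.range (m-n), z ^ i :=
      Finset.sum_range_reflect (fun i => z ^ i) (m-n)
    rw [refl, ← Finset.mul_sum]
    rw [geo (m+n), geo (m-n)]
    field_simp

lemma dirichlet_eq (l : ℕ) (t : ℝ) :
    dirichletKer l t = ∑ j ∈ Finset.Icc (-(l:ℤ)) (l:ℤ), (cexpI t) ^ j := by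
  unfold dirichletKer
  apply Finset.sum_congr rfl
  intro j _
  rw [← cexpI_zpow]
  unfold cexpI
  congr 1
  push_cast
  ring

lemma expSum_eq (q : ℕ) (t : ℝ) : expSum q t = ∑ a ∈ Finset.range q, (cexpI t) ^ a := by
  unfold expSum
  exact Finset.sum_congr rfl fun a _ => cexpI_npow a t

lemma vp_abs_factor (n m : ℕ) (h : n < m) (t : ℝ) :
    ‖vpKer n m t‖ * ((m : ℝ) - n) =
      ‖expSum (m+n) t‖ * ‖expSum (m-n) t‖ := by
  have hmnR : (0:ℝ) < (m:ℝ) - n := by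
    have : (n:ℝ) < m := by exact_mod_cast h
    linarith
  have hmn : ((m:ℂ) - n) ≠ 0 := by
    intro hc
    have : ((m:ℝ) - n : ℝ) = ((0:ℝ)) := by
      have := congrArg Complex.re hc
      simpa using this
    linarith
  have habs_mn : ‖(m:ℂ) - n‖ = (m:ℝ) - n := by
    rw [show ((m:ℂ) - n) = (((m:ℝ) - n : ℝ) : ℂ) by push_cast; ring]
    rw [Complex.norm_real, Real.norm_eq_abs, abs_of_pos hmnR]
  have hprod : vpKer n m t * ((m:ℂ) - n) = ∑ l ∈ Finset.Ico n m, dirichletKer l t := by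
    unfold vpKer
    field_simp
  have hz : cexpI t ≠ 0 := cexpI_ne_zero t
  have habs_pow : ‖(cexpI t) ^ (m-1:ℕ)‖ = 1 := by
    rw [norm_pow, abs_cexpI, one_pow]
  calc ‖vpKer n m t‖ * ((m : ℝ) - n)
      = ‖vpKer n m t * ((m:ℂ) - n)‖ := by rw [norm_mul, habs_mn]
    _ = ‖∑ l ∈ Finset.Ico n m, dirichletKer l t‖ := by rw [hprod]
    _ = ‖(∑ l ∈ Finset.Ico n m, ∑ j ∈ Finset.Icc (-(l:ℤ)) (l:ℤ), (cexpI t) ^ j)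
          * (cexpI t) ^ (m-1:ℕ)‖ := by
        rw [norm_mul, habs_pow, mul_one]
        congr 1
        exact Finset.sum_congr rfl fun l _ => dirichlet_eq l t
    _ = ‖(∑ a ∈ Finset.range (m+n), (cexpI t) ^ a)
          * (∑ b ∈ Finset.range (m-n), (cexpI t) ^ b)‖ := by rw [vp_core n m h (cexpI t) hz]
    _ = ‖expSum (m+n) t‖ * ‖expSum (m-n) t‖ := by
        rw [norm_mul, expSum_eq, expSum_eq]

lemma dirichlet_eq' (l : ℕ) (s : ℝ) :
    dirichletKer l s = ∑ a ∈ Finset.Icc (-(l:ℤ)) (l:ℤ), cexpI (a * s) := by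
  unfold dirichletKer cexpI
  apply Finset.sum_congr rfl
  intro a _
  congr 1
  push_cast
  ring

lemma inner_repro (n N : ℕ) (hn : 1 ≤ n) (hN : 2*n+1 ≤ N) (j : ℤ)
    (hj : j ∈ Finset.Icc (-(n:ℤ)) (n:ℤ)) (t : ℝ) :
    ∑ k : Fin N, cexpI (j * (2*π*k/N)) * vpKer n (N-n) (t - 2*π*k/N)
      = (N:ℂ) * cexpI (j * t) := by
  have hNpos : 0 < N := by omega
  simp only [Finset.mem_Icc] at hj
  have hnm : n < N - n := by omega
  have hL : ((N-n : ℕ):ℂ) - (n:ℂ) ≠ 0 := by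
    rw [show ((N-n : ℕ):ℂ) - (n:ℂ) = (((N-n-n : ℕ) : ℝ) : ℂ) by push_cast [Nat.cast_sub (by omega : n ≤ N), Nat.cast_sub (by omega : n ≤ N - n)]; ring]
    intro hc
    have : ((N-n-n : ℕ) : ℝ) = 0 := by exact_mod_cast hc
    have : N - n - n = 0 := by exact_mod_cast this
    omega
  have key : ∀ k : Fin N,
      cexpI (j * (2*π*k/N)) * vpKer n (N-n) (t - 2*π*k/N)
        = (1/(((N-n : ℕ):ℂ) - (n:ℂ))) * ∑ l ∈ Finset.Ico n (N-n),
            ∑ a ∈ Finset.Icc (-(l:ℤ)) (l:ℤ),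
              cexpI (a * t) * cexpI (((j - a : ℤ) : ℝ) * (2*π*k/N)) := by
    intro k
    unfold vpKer
    simp_rw [dirichlet_eq']
    rw [mul_left_comm]
    congr 1
    rw [Finset.mul_sum]
    apply Finset.sum_congr rfl
    intro l _
    rw [Finset.mul_sum]
    apply Finset.sum_congr rfl
    intro a _
    rw [← cexpI_add, ← cexpI_add]
    congr 1
    push_cast
    ring
  simp_rw [key]
  rw [← Finset.mul_sum, Finset.sum_comm]
  have step_l : ∀ l ∈ Finset.Ico n (N-n),
      (∑ k : Fin N, ∑ a ∈ Finset.Icc (-(l:ℤ)) (l:ℤ),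
        cexpI (a * t) * cexpI (((j - a : ℤ) : ℝ) * (2*π*k/N)))
        = (N:ℂ) * cexpI (j * t) := by
    intro l hl
    simp only [Finset.mem_Ico] at hl
    rw [Finset.sum_comm]
    have step_a : ∀ a ∈ Finset.Icc (-(l:ℤ)) (l:ℤ),
        (∑ k : Fin N, cexpI (a * t) * cexpI (((j - a : ℤ) : ℝ) * (2*π*k/N)))
          = if a = j then (N:ℂ) * cexpI (j * t) else 0 := by
      intro a ha
      simp only [Finset.mem_Icc] at ha
      rw [← Finset.mul_sum, sum_cexpI_grid N hNpos]
      have hiff : ((N:ℤ) ∣ (j - a)) ↔ a = j := by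
        constructor
        · intro hdvd
          have : |j - a| < N := abs_lt.mpr (by omega)
          have := Int.eq_zero_of_abs_lt_dvd hdvd this
          omega
        · rintro rfl; simp
      by_cases haj : a = j
      · rw [if_pos (hiff.mpr haj), if_pos haj, haj, mul_comm]
      · rw [if_neg (fun hh => haj (hiff.mp hh)), if_neg haj, mul_zero]
    rw [Finset.sum_congr rfl step_a, Finset.sum_ite_eq' _ j]
    rw [if_pos (Finset.mem_Icc.mpr (by omega))]
  rw [Finset.sum_congr rfl step_l, Finset.sum_const, Nat.card_Ico, nsmul_eq_mul]
  rw [show ((N-n-n : ℕ):ℂ) = (((N-n:ℕ):ℂ) - (n:ℂ)) by push_cast [Nat.cast_sub (by omega : n ≤ N), Nat.cast_sub (by omega : n ≤ N - n)]; ring]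
  rw [← mul_assoc]
  rw [one_div, inv_mul_cancel₀ hL, one_mul]

lemma repro (n N : ℕ) (hn : 1 ≤ n) (hN : 2*n+1 ≤ N) (c : ℤ → ℂ) (t : ℝ) :
    ∑ j ∈ Finset.Icc (-(n:ℤ)) (n:ℤ), c j * cexpI (j * t)
      = (1/(N:ℂ)) * ∑ k : Fin N,
          (∑ j ∈ Finset.Icc (-(n:ℤ)) (n:ℤ), c j * cexpI (j * (2*π*k/N)))
            * vpKer n (N-n) (t - 2*π*k/N) := by
  have hNpos : 0 < N := by omega
  have hNne : (N:ℂ) ≠ 0 := Nat.cast_ne_zero.mpr hNpos.ne'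
  have hmain : ∑ k : Fin N,
      (∑ j ∈ Finset.Icc (-(n:ℤ)) (n:ℤ), c j * cexpI (j * (2*π*k/N)))
        * vpKer n (N-n) (t - 2*π*k/N)
      = ∑ j ∈ Finset.Icc (-(n:ℤ)) (n:ℤ), c j * ((N:ℂ) * cexpI (j * t)) := by
    simp_rw [Finset.sum_mul]
    rw [Finset.sum_comm]
    apply Finset.sum_congr rfl
    intro j hj
    rw [Finset.sum_congr rfl (fun (k : Fin N) _ => mul_assoc (c j)
      (cexpI (j * (2*π*k/N))) (vpKer n (N-n) (t - 2*π*k/N)))]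
    rw [← Finset.mul_sum, inner_repro n N hn hN j hj t]
  rw [hmain, Finset.mul_sum]
  apply Finset.sum_congr rfl
  intro j _
  field_simp

lemma uni_bound (n N : ℕ) (hn : 1 ≤ n) (hN : 2*n+1 ≤ N) (c : ℤ → ℂ) (B : ℝ)
    (hB : ∀ k : Fin N, ‖∑ j ∈ Finset.Icc (-(n:ℤ)) (n:ℤ),
        c j * cexpI (j * (2*π*k/N))‖ ≤ B) (t : ℝ) :
    ‖∑ j ∈ Finset.Icc (-(n:ℤ)) (n:ℤ), c j * cexpI (j * t)‖
      ≤ Real.sqrt ((N:ℝ)/((N-2*n : ℕ):ℝ)) * B := by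
  have hNpos : 0 < N := by omega
  set m := N - n with hm
  set L := N - 2*n with hLdef
  have hmn : n < m := by omega
  have hL1 : 1 ≤ L := by omega
  have hLm : m - n = L := by omega
  have hmn' : m + n = N := by omega
  have hLR : (0:ℝ) < (L:ℝ) := by exact_mod_cast hL1
  have hNR : (0:ℝ) < (N:ℝ) := by exact_mod_cast hNpos
  have hLN : L ≤ N := by omega
  have hB0 : 0 ≤ B := le_trans (norm_nonneg _) (hB ⟨0, hNpos⟩)
  rw [repro n N hn hN c t, norm_mul]
  have h1N : ‖1/(N:ℂ)‖ = 1/(N:ℝ) := by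
    rw [norm_div, norm_one, Complex.norm_natCast]
  rw [h1N]
  have tri : ‖∑ k : Fin N,
      (∑ j ∈ Finset.Icc (-(n:ℤ)) (n:ℤ), c j * cexpI (j * (2*π*k/N)))
        * vpKer n m (t - 2*π*k/N)‖
      ≤ ∑ k : Fin N, B * ‖vpKer n m (t - 2*π*k/N)‖ := by
    have htri := norm_sum_le Finset.univ (fun k : Fin N =>
      (∑ j ∈ Finset.Icc (-(n:ℤ)) (n:ℤ), c j * cexpI (j * (2*π*k/N)))
        * vpKer n m (t - 2*π*k/N))
    refine le_trans htri (Finset.sum_le_sum ?_)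
    intro k _
    rw [norm_mul]
    exact mul_le_mul_of_nonneg_right (hB k) (norm_nonneg _)
  have hfac : ∀ k : Fin N, B * ‖vpKer n m (t - 2*π*k/N)‖
      = (B/(L:ℝ)) * (‖expSum N (t - 2*π*k/N)‖
          * ‖expSum L (t - 2*π*k/N)‖) := by
    intro k
    have hv := vp_abs_factor n m hmn (t - 2*π*k/N)
    rw [hmn', hLm] at hv
    have hmnL : (m:ℝ) - n = (L:ℝ) := by
      rw [← hLm]
      push_cast [Nat.cast_sub hmn.le]
      ring
    rw [hmnL] at hv
    rw [← hv]
    field_simp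
  have CS : ∑ k : Fin N, ‖expSum N (t - 2*π*k/N)‖
        * ‖expSum L (t - 2*π*k/N)‖
      ≤ Real.sqrt ((N:ℝ)*N) * Real.sqrt ((N:ℝ)*L) := by
    have h2 := Finset.sum_mul_sq_le_sq_mul_sq Finset.univ
      (fun k : Fin N => ‖expSum N (t - 2*π*k/N)‖)
      (fun k : Fin N => ‖expSum L (t - 2*π*k/N)‖)
    rw [sum_abs_sq_expSum N N hNpos le_rfl t, sum_abs_sq_expSum N L hNpos hLN t] at h2
    have hnn : 0 ≤ ∑ k : Fin N, ‖expSum N (t - 2*π*k/N)‖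
        * ‖expSum L (t - 2*π*k/N)‖ :=
      Finset.sum_nonneg fun k _ => mul_nonneg (norm_nonneg _) (norm_nonneg _)
    calc ∑ k : Fin N, ‖expSum N (t - 2*π*k/N)‖ * ‖expSum L (t - 2*π*k/N)‖
        = Real.sqrt ((∑ k : Fin N, ‖expSum N (t - 2*π*k/N)‖
            * ‖expSum L (t - 2*π*k/N)‖)^2) := (Real.sqrt_sq hnn).symm
      _ ≤ Real.sqrt (((N:ℝ)*N) * ((N:ℝ)*L)) := Real.sqrt_le_sqrt h2
      _ = Real.sqrt ((N:ℝ)*N) * Real.sqrt ((N:ℝ)*L) := Real.sqrt_mul (by positivity) _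
  have hsqNN : Real.sqrt ((N:ℝ)*N) = (N:ℝ) := Real.sqrt_mul_self hNR.le
  have hsqNL : Real.sqrt ((N:ℝ)*L) = Real.sqrt ((N:ℝ)/L) * L := by
    rw [show (N:ℝ)*L = ((N:ℝ)/L) * L^2 by field_simp]
    rw [Real.sqrt_mul (by positivity), Real.sqrt_sq hLR.le]
  calc (1/(N:ℝ)) * ‖∑ k : Fin N,
      (∑ j ∈ Finset.Icc (-(n:ℤ)) (n:ℤ), c j * cexpI (j * (2*π*k/N)))
        * vpKer n m (t - 2*π*k/N)‖
      ≤ (1/(N:ℝ)) * ∑ k : Fin N, B * ‖vpKer n m (t - 2*π*k/N)‖ :=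
        mul_le_mul_of_nonneg_left tri (by positivity)
    _ = (1/(N:ℝ)) * ((B/(L:ℝ)) * ∑ k : Fin N, ‖expSum N (t - 2*π*k/N)‖
          * ‖expSum L (t - 2*π*k/N)‖) := by
        rw [Finset.sum_congr rfl (fun k _ => hfac k), ← Finset.mul_sum]
    _ ≤ (1/(N:ℝ)) * ((B/(L:ℝ)) * (Real.sqrt ((N:ℝ)*N) * Real.sqrt ((N:ℝ)*L))) := by
        apply mul_le_mul_of_nonneg_left _ (by positivity)
        exact mul_le_mul_of_nonneg_left CS (by positivity)
    _ = Real.sqrt ((N:ℝ)/((L:ℕ):ℝ)) * B := by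
        rw [hsqNN, hsqNL]
        field_simp

/-- sum splitting over piFinset via snoc -/
lemma piFinset_snoc_sum {M : Type*} [AddCommMonoid M] (d : ℕ) (s : Finset ℤ)
    (f : (Fin (d+1) → ℤ) → M) :
    ∑ k ∈ Fintype.piFinset (fun _ : Fin (d+1) => s), f k
      = ∑ j ∈ s, ∑ k' ∈ Fintype.piFinset (fun _ : Fin d => s), f (Fin.snoc k' j) := by
  rw [← Finset.sum_product']
  apply Finset.sum_nbij' (i := fun (k : Fin (d+1) → ℤ) => (k (Fin.last d), Fin.init k))
    (j := fun x : ℤ × (Fin d → ℤ) => Fin.snoc x.2 x.1)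
  · intro k hk
    simp only [Fintype.mem_piFinset] at hk
    simp only [Finset.mem_product, Fintype.mem_piFinset]
    exact ⟨hk _, fun i => hk _⟩
  · intro x hx
    simp only [Finset.mem_product, Fintype.mem_piFinset] at hx
    simp only [Fintype.mem_piFinset]
    intro i
    induction i using Fin.lastCases with
    | last => simpa using hx.1
    | cast i => simpa using hx.2 i
  · intro k hk
    exact Fin.snoc_init_self k
  · intro x hx
    simp
  · intro k hk
    rw [Fin.snoc_init_self]

lemma sum_snoc_mul (d : ℕ) (k' : Fin d → ℤ) (j : ℤ) (θ' : Fin d → ℝ) (t : ℝ) :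
    (∑ i : Fin (d+1), (((Fin.snoc k' j : Fin (d+1) → ℤ) i : ℤ) : ℝ)
        * (Fin.snoc θ' t : Fin (d+1) → ℝ) i)
      = (∑ i : Fin d, ((k' i : ℤ) : ℝ) * θ' i) + (j : ℝ) * t := by
  rw [Fin.sum_univ_castSucc]
  simp

lemma split_eval (n d : ℕ) (c : (Fin (d+1) → ℤ) → ℂ) (θ' : Fin d → ℝ) (t : ℝ) :
    (∑ k ∈ Fintype.piFinset (fun _ : Fin (d+1) => Finset.Icc (-(n:ℤ)) (n:ℤ)),
        c k * cexpI (∑ i, ((k i : ℤ) : ℝ) * (Fin.snoc θ' t : Fin (d+1) → ℝ) i))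
      = ∑ j ∈ Finset.Icc (-(n:ℤ)) (n:ℤ),
          (∑ k' ∈ Fintype.piFinset (fun _ : Fin d => Finset.Icc (-(n:ℤ)) (n:ℤ)),
            c (Fin.snoc k' j) * cexpI (∑ i, ((k' i : ℤ) : ℝ) * θ' i)) * cexpI (j * t) := by
  rw [piFinset_snoc_sum]
  refine Finset.sum_congr rfl fun j _ => ?_
  rw [Finset.sum_mul]
  refine Finset.sum_congr rfl fun k' _ => ?_
  rw [sum_snoc_mul, cexpI_add, mul_assoc]

lemma trigGrid_snoc (N d : ℕ) (kk : Fin d → Fin N) (k : Fin N) :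
    trigGrid N (Fin.snoc kk k : Fin (d+1) → Fin N)
      = Fin.snoc (trigGrid N kk) (2 * π * (k : ℝ) / N) := by
  funext i
  induction i using Fin.lastCases with
  | last => simp [trigGrid]
  | cast i => simp [trigGrid]

/-- Main multivariate bound, by induction on dimension. -/
lemma multi_bound (n N : ℕ) (hn : 1 ≤ n) (hN : 2*n+1 ≤ N) :
    ∀ (d : ℕ) (c : (Fin d → ℤ) → ℂ) (B : ℝ),
      (∀ kk : Fin d → Fin N,
        ‖∑ k ∈ Fintype.piFinset (fun _ : Fin d => Finset.Icc (-(n:ℤ)) (n:ℤ)),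
          c k * cexpI (∑ i, ((k i : ℤ) : ℝ) * trigGrid N kk i)‖ ≤ B) →
      ∀ θ : Fin d → ℝ,
        ‖∑ k ∈ Fintype.piFinset (fun _ : Fin d => Finset.Icc (-(n:ℤ)) (n:ℤ)),
          c k * cexpI (∑ i, ((k i : ℤ) : ℝ) * θ i)‖
          ≤ (Real.sqrt ((N:ℝ)/((N-2*n : ℕ):ℝ)))^d * B := by
  intro d
  induction d with
  | zero =>
    intro c B hB θ
    have hθ : θ = trigGrid N (fun i : Fin 0 => i.elim0) := by
      funext i; exact i.elim0
    rw [hθ, pow_zero, one_mul]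
    exact hB _
  | succ d ih =>
    intro c B hB θ
    set C := Real.sqrt ((N:ℝ)/((N-2*n : ℕ):ℝ)) with hC
    -- d-variate coefficient function for a fixed last value τ
    set cτ : ℝ → (Fin d → ℤ) → ℂ := fun τ k' =>
      ∑ j ∈ Finset.Icc (-(n:ℤ)) (n:ℤ), c (Fin.snoc k' j) * cexpI (j * τ) with hcτ
    -- identity (iii)
    have hiii : ∀ (θ' : Fin d → ℝ) (τ : ℝ),
        (∑ k' ∈ Fintype.piFinset (fun _ : Fin d => Finset.Icc (-(n:ℤ)) (n:ℤ)),
          cτ τ k' * cexpI (∑ i, ((k' i : ℤ) : ℝ) * θ' i))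
        = ∑ k ∈ Fintype.piFinset (fun _ : Fin (d+1) => Finset.Icc (-(n:ℤ)) (n:ℤ)),
            c k * cexpI (∑ i, ((k i : ℤ) : ℝ) * (Fin.snoc θ' τ : Fin (d+1) → ℝ) i) := by
      intro θ' τ
      rw [split_eval]
      simp only [hcτ]
      simp_rw [Finset.sum_mul]
      conv_lhs => rw [Finset.sum_comm]
      exact Finset.sum_congr rfl fun j _ => Finset.sum_congr rfl fun k' _ => by ring
    -- grid bound for cτ at grid values
    have hgrid : ∀ k : Fin N, ∀ kk : Fin d → Fin N,
        ‖∑ k' ∈ Fintype.piFinset (fun _ : Fin d => Finset.Icc (-(n:ℤ)) (n:ℤ)),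
          cτ (2*π*(k:ℝ)/N) k' * cexpI (∑ i, ((k' i : ℤ) : ℝ) * trigGrid N kk i)‖ ≤ B := by
      intro k kk
      rw [hiii, ← trigGrid_snoc]
      exact hB _
    -- IH: d-variate bound for each τ on the 1-d grid
    have hIH : ∀ k : Fin N, ∀ θ' : Fin d → ℝ,
        ‖∑ k' ∈ Fintype.piFinset (fun _ : Fin d => Finset.Icc (-(n:ℤ)) (n:ℤ)),
          cτ (2*π*(k:ℝ)/N) k' * cexpI (∑ i, ((k' i : ℤ) : ℝ) * θ' i)‖ ≤ C^d * B := by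
      intro k θ'
      exact ih (cτ (2*π*(k:ℝ)/N)) B (hgrid k) θ'
    -- now univariate in the last variable
    set θ' : Fin d → ℝ := Fin.init θ with hθ'
    set t : ℝ := θ (Fin.last d) with ht
    have hθsnoc : θ = Fin.snoc θ' t := (Fin.snoc_init_self θ).symm
    set cc : ℤ → ℂ := fun j =>
      ∑ k' ∈ Fintype.piFinset (fun _ : Fin d => Finset.Icc (-(n:ℤ)) (n:ℤ)),
        c (Fin.snoc k' j) * cexpI (∑ i, ((k' i : ℤ) : ℝ) * θ' i) with hcc
    have huni : ∀ s : ℝ,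
        (∑ k ∈ Fintype.piFinset (fun _ : Fin (d+1) => Finset.Icc (-(n:ℤ)) (n:ℤ)),
          c k * cexpI (∑ i, ((k i : ℤ) : ℝ) * (Fin.snoc θ' s : Fin (d+1) → ℝ) i))
        = ∑ j ∈ Finset.Icc (-(n:ℤ)) (n:ℤ), cc j * cexpI (j * s) := by
      intro s
      rw [split_eval]
    have hccgrid : ∀ k : Fin N,
        ‖∑ j ∈ Finset.Icc (-(n:ℤ)) (n:ℤ), cc j * cexpI (j * (2*π*(k:ℝ)/N))‖ ≤ C^d * B := by
      intro k
      rw [← huni, ← hiii θ' (2*π*(k:ℝ)/N)]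
      · exact hIH k θ'
    have := uni_bound n N hn hN cc (C^d * B) hccgrid t
    rw [← huni, ← hθsnoc] at this
    calc ‖_‖ ≤ C * (C^d * B) := this
      _ = C^(d+1) * B := by ring

theorem stmt0 (d n N : ℕ) (hd : 1 ≤ d) (hn : 1 ≤ n) (hN : 2 * n + 1 ≤ N)
    (p : (Fin d → ℝ) → ℂ) (hp : IsTrigPoly d n p)
    (α : ℝ) (hα : α = 2 * n / N) (M : ℝ)
    (hM : IsGreatest (Set.range fun k : Fin d → Fin N => ‖p (trigGrid N k)‖) M) :
    ∀ θ : Fin d → ℝ, ‖p θ‖ ≤ (1 - α) ^ (-(d : ℝ) / 2) * M := by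
  intro θ
  obtain ⟨c, hpc⟩ := hp
  have hNpos : 0 < N := by omega
  have hL1 : 1 ≤ N - 2*n := by omega
  have hLR : (0:ℝ) < ((N - 2*n : ℕ) : ℝ) := by exact_mod_cast hL1
  have hNR : (0:ℝ) < (N:ℝ) := by exact_mod_cast hNpos
  have hMub : ∀ kk : Fin d → Fin N, ‖p (trigGrid N kk)‖ ≤ M := by
    intro kk
    exact hM.2 (Set.mem_range_self kk)
  have hpform : ∀ θ : Fin d → ℝ, p θ =
      ∑ k ∈ Fintype.piFinset (fun _ : Fin d => Finset.Icc (-(n : ℤ)) (n : ℤ)),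
        c k * cexpI (∑ i, ((k i : ℤ) : ℝ) * θ i) := hpc
  have key := multi_bound n (N := N) hn (by omega) d c M
    (fun kk => by rw [← hpform]; exact hMub kk) θ
  rw [← hpform] at key
  have hCeq : (1 - α) ^ (-(d : ℝ) / 2) = (Real.sqrt ((N:ℝ)/((N - 2*n : ℕ) : ℝ)))^d := by
    have h1α : 1 - α = ((N - 2*n : ℕ) : ℝ)/(N:ℝ) := by
      rw [hα]
      rw [Nat.cast_sub (by omega : 2*n ≤ N)]
      push_cast
      field_simp
    rw [h1α]
    set x : ℝ := ((N - 2*n : ℕ) : ℝ)/(N:ℝ) with hx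
    have hxpos : 0 < x := by positivity
    have hstep : x ^ (-(d : ℝ) / 2) = (x ^ (-(1:ℝ)/2))^(d:ℕ) := by
      rw [← Real.rpow_natCast (x ^ (-(1:ℝ)/2)) d, ← Real.rpow_mul hxpos.le]
      congr 1
      ring
    rw [hstep]
    congr 1
    rw [show -(1:ℝ)/2 = -(1/2) by ring, Real.rpow_neg hxpos.le, ← Real.sqrt_eq_rpow,
      ← Real.sqrt_inv]
    congr 1
    rw [hx]
    field_simp
  rw [hCeq]
  exact key
end

section
/- Let d ≥ 1, n ≥ 1 and N ≥ 2n+1 be integers and let p be a d-variate trigonometric polynomial of degree at most n. Then for every θ ∈ ℝ^d, |p(θ)| ≤ ( N^{−1} · sup_{t ∈ [0,2π]} Σ_{j=0}^{N−1} |D_{n,N−n}(t − 2πj/N)| )^d · max_{θ_k ∈ Θ_N^d} |p(θ_k)|. -/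
open Complex Finset in
lemma orth (N : ℕ) (hN : 0 < N) (r : ℤ) :
    ∑ j ∈ Finset.range N, Complex.exp (Complex.I * (2 * Real.pi * (r : ℂ) * (j : ℂ) / N)) =
      if (N:ℤ) ∣ r then (N:ℂ) else 0 := by
  have hNne : (N:ℂ) ≠ 0 := Nat.cast_ne_zero.mpr hN.ne'
  have hterm : ∀ j ∈ Finset.range N,
      Complex.exp (Complex.I * (2 * Real.pi * (r:ℂ) * (j:ℂ) / N)) =
        Complex.exp (Complex.I * (2 * Real.pi * (r:ℂ) / N)) ^ j := by
    intro j _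
    rw [← Complex.exp_nat_mul]
    congr 1
    ring
  rw [Finset.sum_congr rfl hterm]
  by_cases h : (N:ℤ) ∣ r
  · obtain ⟨s, rfl⟩ := h
    have h1 : Complex.I * (2 * Real.pi * ((N * s : ℤ):ℂ) / N) = (s:ℂ) * (2 * Real.pi * Complex.I) := by
      push_cast
      field_simp
    rw [if_pos ⟨s, rfl⟩, h1, Complex.exp_int_mul_two_pi_mul_I]
    simp
  · rw [if_neg h]
    set ω := Complex.exp (Complex.I * (2 * Real.pi * (r:ℂ) / N)) with hω
    have hω1 : ω ≠ 1 := by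
      intro hc
      rw [hω, Complex.exp_eq_one_iff] at hc
      obtain ⟨z, hz⟩ := hc
      have h2 : Complex.I * (2 * Real.pi * (r:ℂ) / N) = Complex.I * ((z:ℂ) * (2 * Real.pi)) := by
        rw [hz]; ring
      have h3 : (2:ℂ) * Real.pi * (r:ℂ) / N = (z:ℂ) * (2 * Real.pi) := by
        exact mul_left_cancel₀ Complex.I_ne_zero h2
      have hpi : (Real.pi : ℂ) ≠ 0 := by exact_mod_cast Real.pi_ne_zero
      have h4 : (r:ℂ) = (z:ℂ) * (N:ℂ) := by
        field_simp at h3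
        linear_combination h3
      have h5 : r = z * N := by exact_mod_cast h4
      exact h ⟨z, by linarith [h5, mul_comm z (N:ℤ)]⟩
    have hωN : ω ^ N = 1 := by
      rw [hω, ← Complex.exp_nat_mul]
      have : (N:ℂ) * (Complex.I * (2 * Real.pi * (r:ℂ) / N)) = (r:ℂ) * (2 * Real.pi * Complex.I) := by
        field_simp
      rw [this, Complex.exp_int_mul_two_pi_mul_I]
    rw [geom_sum_eq hω1, hωN]
    simp

lemma uni (n N : ℕ) (hn : 1 ≤ n) (hN : 2 * n + 1 ≤ N) (k : ℤ) (hk : |k| ≤ (n:ℤ)) (θ : ℝ) :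
    ∑ j ∈ Finset.range N,
        Complex.exp (Complex.I * ((k:ℂ) * (2 * Real.pi * (j:ℂ) / N))) *
          vpKer n (N - n) (θ - 2 * Real.pi * (j : ℝ) / N)
      = (N:ℂ) * Complex.exp (Complex.I * ((k:ℂ) * (θ:ℂ))) := by
  have hNpos : 0 < N := by omega
  have hnN : n ≤ N - n := by omega
  unfold vpKer dirichletKer
  -- push everything into a triple sum
  have step1 : ∀ j ∈ Finset.range N,
      Complex.exp (Complex.I * ((k:ℂ) * (2 * Real.pi * (j:ℂ) / N))) *
        ((1 / (((N - n : ℕ):ℂ) - (n:ℂ))) * ∑ l ∈ Finset.Ico n (N - n),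
          ∑ q ∈ Finset.Icc (-(l:ℤ)) (l:ℤ),
            Complex.exp (Complex.I * (q:ℂ) * ((θ - 2 * Real.pi * (j:ℝ) / N : ℝ):ℂ)))
      = (1 / (((N - n : ℕ):ℂ) - (n:ℂ))) * ∑ l ∈ Finset.Ico n (N - n),
          ∑ q ∈ Finset.Icc (-(l:ℤ)) (l:ℤ),
            Complex.exp (Complex.I * ((q:ℂ) * θ)) *
              Complex.exp (Complex.I * (2 * Real.pi * (((k - q : ℤ)):ℂ) * (j:ℂ) / N)) := by
    intro j _
    rw [mul_left_comm]
    congr 1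
    rw [Finset.mul_sum]
    apply Finset.sum_congr rfl
    intro l _
    rw [Finset.mul_sum]
    apply Finset.sum_congr rfl
    intro q _
    rw [mul_comm, mul_assoc, ← Complex.exp_add, ← Complex.exp_add]
    congr 1
    push_cast
    field_simp
    ring
  rw [Finset.sum_congr rfl step1, ← Finset.mul_sum]
  rw [Finset.sum_comm]
  have step2 : ∀ l ∈ Finset.Ico n (N - n),
      ∑ j ∈ Finset.range N, ∑ q ∈ Finset.Icc (-(l:ℤ)) (l:ℤ),
          Complex.exp (Complex.I * ((q:ℂ) * θ)) *
            Complex.exp (Complex.I * (2 * Real.pi * (((k - q : ℤ)):ℂ) * (j:ℂ) / N))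
        = (N:ℂ) * Complex.exp (Complex.I * ((k:ℂ) * θ)) := by
    intro l hl
    rw [Finset.mem_Ico] at hl
    rw [Finset.sum_comm]
    have inner : ∀ q ∈ Finset.Icc (-(l:ℤ)) (l:ℤ),
        ∑ j ∈ Finset.range N,
            Complex.exp (Complex.I * ((q:ℂ) * θ)) *
              Complex.exp (Complex.I * (2 * Real.pi * (((k - q : ℤ)):ℂ) * (j:ℂ) / N))
          = if q = k then (N:ℂ) * Complex.exp (Complex.I * ((q:ℂ) * θ)) else 0 := by
      intro q hq
      rw [Finset.mem_Icc] at hq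
      rw [← Finset.mul_sum, orth N hNpos (k - q)]
      have habs : |k - q| < (N:ℤ) := by
        rcases abs_le.mp hk with ⟨h1, h2⟩
        rw [abs_lt]
        omega
      by_cases hqk : q = k
      · subst hqk
        simp [mul_comm]
      · rw [if_neg hqk, if_neg, mul_zero]
        intro hdvd
        exact hqk (by have := Int.eq_zero_of_abs_lt_dvd hdvd habs; omega)
    rw [Finset.sum_congr rfl inner, Finset.sum_ite_eq' _ k]
    rw [if_pos]
    rw [Finset.mem_Icc]
    rcases abs_le.mp hk with ⟨h1, h2⟩
    constructor <;> omega
  rw [Finset.sum_congr rfl step2, Finset.sum_const, Nat.card_Ico]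
  have hcast : ((N - n : ℕ):ℂ) - (n:ℂ) = ((N - n - n : ℕ):ℂ) := by
    push_cast [Nat.cast_sub hnN, Nat.cast_sub (by omega : n ≤ N)]
    ring
  have hne : ((N - n - n : ℕ):ℂ) ≠ 0 := by
    rw [Nat.cast_ne_zero]
    omega
  rw [hcast, nsmul_eq_mul]
  rw [← mul_assoc, ← mul_assoc, one_div, inv_mul_cancel₀ hne, one_mul]

lemma expand (d : ℕ) (m : Fin d → ℤ) (θ : Fin d → ℝ) :
    Complex.exp (Complex.I * ((∑ i, (m i : ℝ) * θ i : ℝ) : ℂ)) =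
      ∏ i, Complex.exp (Complex.I * ((m i : ℂ) * (θ i : ℂ))) := by
  rw [← Complex.exp_sum]
  congr 1
  rw [← Finset.mul_sum]
  congr 1
  push_cast
  rfl

lemma reprLem (d n N : ℕ) (hn : 1 ≤ n) (hN : 2 * n + 1 ≤ N)
    (p : (Fin d → ℝ) → ℂ) (c : (Fin d → ℤ) → ℂ)
    (hc : ∀ θ : Fin d → ℝ, p θ = ∑ m ∈ Fintype.piFinset (fun _ : Fin d => Finset.Icc (-(n : ℤ)) (n : ℤ)),
      c m * Complex.exp (Complex.I * ((∑ i, (m i : ℝ) * θ i : ℝ) : ℂ)))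
    (θ : Fin d → ℝ) :
    p θ = (1 / (N:ℂ)) ^ d * ∑ k : Fin d → Fin N,
      p (trigGrid N k) * ∏ i, vpKer n (N - n) (θ i - 2 * Real.pi * ((k i : ℕ) : ℝ) / N) := by
  have hNpos : 0 < N := by omega
  have key : ∀ k : Fin d → Fin N,
      p (trigGrid N k) * ∏ i, vpKer n (N - n) (θ i - 2 * Real.pi * ((k i : ℕ):ℝ) / N)
      = ∑ m ∈ Fintype.piFinset (fun _ : Fin d => Finset.Icc (-(n : ℤ)) (n : ℤ)),
          c m * ∏ i, (Complex.exp (Complex.I * ((m i:ℂ) * (2 * Real.pi * ((k i:ℕ):ℂ) / N))) *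
            vpKer n (N - n) (θ i - 2 * Real.pi * ((k i : ℕ):ℝ) / N)) := by
    intro k
    rw [hc, Finset.sum_mul]
    apply Finset.sum_congr rfl
    intro m _
    rw [mul_assoc, expand]
    congr 1
    rw [← Finset.prod_mul_distrib]
    apply Finset.prod_congr rfl
    intro i _
    congr 2
    simp only [trigGrid]
    push_cast
    ring
  rw [Finset.sum_congr rfl (fun k _ => key k), Finset.sum_comm]
  have inner : ∀ m ∈ Fintype.piFinset (fun _ : Fin d => Finset.Icc (-(n : ℤ)) (n : ℤ)),
      ∑ k : Fin d → Fin N,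
        c m * ∏ i, (Complex.exp (Complex.I * ((m i:ℂ) * (2 * Real.pi * ((k i:ℕ):ℂ) / N))) *
          vpKer n (N - n) (θ i - 2 * Real.pi * ((k i : ℕ):ℝ) / N))
      = c m * ((N:ℂ) ^ d * Complex.exp (Complex.I * ((∑ i, (m i : ℝ) * θ i : ℝ) : ℂ))) := by
    intro m hm
    rw [← Finset.mul_sum]
    congr 1
    rw [← Fintype.piFinset_univ,
      ← Finset.prod_univ_sum (fun _ : Fin d => (Finset.univ : Finset (Fin N)))
        (fun i (j : Fin N) => Complex.exp (Complex.I * ((m i:ℂ) * (2 * Real.pi * ((j:ℕ):ℂ) / N))) *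
          vpKer n (N - n) (θ i - 2 * Real.pi * ((j:ℕ):ℝ) / N))]
    have fact : ∀ i : Fin d,
        ∑ j : Fin N, Complex.exp (Complex.I * ((m i:ℂ) * (2 * Real.pi * ((j:ℕ):ℂ) / N))) *
            vpKer n (N - n) (θ i - 2 * Real.pi * ((j : ℕ):ℝ) / N)
        = (N:ℂ) * Complex.exp (Complex.I * ((m i:ℂ) * ((θ i : ℝ):ℂ))) := by
      intro i
      rw [Fin.sum_univ_eq_sum_range (fun j : ℕ =>
        Complex.exp (Complex.I * ((m i:ℂ) * (2 * Real.pi * (j:ℂ) / N))) *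
          vpKer n (N - n) (θ i - 2 * Real.pi * (j:ℝ) / N))]
      apply uni n N hn hN (m i) _ (θ i)
      have := Fintype.mem_piFinset.mp hm i
      rw [Finset.mem_Icc] at this
      rw [abs_le]
      exact this
    rw [Finset.prod_congr rfl (fun i _ => fact i), Finset.prod_mul_distrib,
      Finset.prod_const, Finset.card_univ, Fintype.card_fin, expand]
  rw [Finset.sum_congr rfl inner, Finset.mul_sum]
  rw [hc]
  apply Finset.sum_congr rfl
  intro m _
  have hNne : (N:ℂ) ^ d ≠ 0 := pow_ne_zero _ (Nat.cast_ne_zero.mpr hNpos.ne')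
  field_simp
  rw [mul_assoc, ← mul_pow, one_div, inv_mul_cancel₀ (Nat.cast_ne_zero.mpr hNpos.ne'), one_pow, mul_one]

lemma vpKer_per (n m : ℕ) (t : ℝ) : vpKer n m (t + 2 * Real.pi) = vpKer n m t := by
  unfold vpKer dirichletKer
  congr 1
  apply Finset.sum_congr rfl
  intro l _
  apply Finset.sum_congr rfl
  intro q _
  have h : Complex.I * (q:ℂ) * (((t + 2 * Real.pi : ℝ)):ℂ)
      = Complex.I * (q:ℂ) * (t:ℂ) + (q:ℂ) * (2 * Real.pi * Complex.I) := by
    push_cast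
    ring
  rw [h, Complex.exp_add, Complex.exp_int_mul_two_pi_mul_I, mul_one]

lemma vpKer_cont (n m : ℕ) : Continuous (fun t : ℝ => vpKer n m t) := by
  unfold vpKer dirichletKer
  apply Continuous.mul continuous_const
  apply continuous_finset_sum
  intro l _
  apply continuous_finset_sum
  intro q _
  exact Complex.continuous_exp.comp (continuous_const.mul Complex.continuous_ofReal)


theorem stmt1 (d n N : ℕ) (hd : 1 ≤ d) (hn : 1 ≤ n) (hN : 2 * n + 1 ≤ N)
    (p : (Fin d → ℝ) → ℂ) (hp : IsTrigPoly d n p) (M : ℝ)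
    (hM : IsGreatest (Set.range fun k : Fin d → Fin N => ‖p (trigGrid N k)‖) M) :
    ∀ θ : Fin d → ℝ, ‖p θ‖ ≤
      ((1 / (N : ℝ)) * sSup {x : ℝ | ∃ t ∈ Set.Icc (0 : ℝ) (2 * Real.pi),
          x = ∑ j ∈ Finset.range N,
            ‖vpKer n (N - n) (t - 2 * Real.pi * (j : ℝ) / N)‖}) ^ d * M := by
  intro θ
  have hNpos : 0 < N := by omega
  obtain ⟨c, hc⟩ := hp
  set F : ℝ → ℝ := fun t => ∑ j ∈ Finset.range N,
    ‖vpKer n (N - n) (t - 2 * Real.pi * (j : ℝ) / N)‖ with hF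
  set A : Set ℝ := {x : ℝ | ∃ t ∈ Set.Icc (0 : ℝ) (2 * Real.pi), x = F t} with hA
  set S : ℝ := sSup A with hS
  -- F is periodic
  have hper : Function.Periodic F (2 * Real.pi) := by
    intro t
    apply Finset.sum_congr rfl
    intro j _
    congr 1
    rw [show t + 2 * Real.pi - 2 * Real.pi * (j:ℝ) / N
        = (t - 2 * Real.pi * (j:ℝ) / N) + 2 * Real.pi by ring]
    exact vpKer_per _ _ _
  -- F is continuous
  have hcont : Continuous F := by
    apply continuous_finset_sum
    intro j _
    exact continuous_norm.comp ((vpKer_cont n (N - n)).comp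
      (continuous_id.sub continuous_const))
  -- A is the image of a compact set
  have hAeq : A = F '' Set.Icc 0 (2 * Real.pi) := by
    ext x
    constructor
    · rintro ⟨t, ht, rfl⟩; exact ⟨t, ht, rfl⟩
    · rintro ⟨t, ht, rfl⟩; exact ⟨t, ht, rfl⟩
  have hbdd : BddAbove A := by
    rw [hAeq]
    exact (isCompact_Icc.image hcont).bddAbove
  -- every value of F is ≤ S
  have hFle : ∀ t : ℝ, F t ≤ S := by
    intro t
    obtain ⟨y, hy, hfy⟩ := hper.exists_mem_Ico₀ Real.two_pi_pos t
    rw [hfy]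
    apply le_csSup hbdd
    exact ⟨y, ⟨hy.1, hy.2.le⟩, rfl⟩
  have hFnonneg : ∀ t : ℝ, 0 ≤ F t := fun t =>
    Finset.sum_nonneg fun j _ => norm_nonneg _
  have hSnonneg : 0 ≤ S := le_trans (hFnonneg 0) (hFle 0)
  have hMnonneg : 0 ≤ M := by
    obtain ⟨k, hk⟩ := hM.1
    rw [← hk]
    exact norm_nonneg _
  have hMle : ∀ k : Fin d → Fin N, ‖p (trigGrid N k)‖ ≤ M := by
    intro k
    exact hM.2 ⟨k, rfl⟩
  -- representation
  rw [reprLem d n N hn hN p c hc θ]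
  rw [norm_mul]
  calc ‖(1 / (N:ℂ)) ^ d‖ * ‖∑ k : Fin d → Fin N,
        p (trigGrid N k) * ∏ i, vpKer n (N - n) (θ i - 2 * Real.pi * ((k i : ℕ):ℝ) / N)‖
      ≤ (1 / (N:ℝ)) ^ d * ∑ k : Fin d → Fin N,
          M * ∏ i, ‖vpKer n (N - n) (θ i - 2 * Real.pi * ((k i : ℕ):ℝ) / N)‖ := by
        apply mul_le_mul
        · rw [norm_pow]
          apply le_of_eq
          congr 1
          rw [norm_div]
          simp
        · refine le_trans (norm_sum_le _ _) (Finset.sum_le_sum fun k _ => ?_)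
          rw [norm_mul, norm_prod]
          apply mul_le_mul_of_nonneg_right (hMle k)
          exact Finset.prod_nonneg fun i _ => norm_nonneg _
        · exact norm_nonneg _
        · positivity
    _ = (1 / (N:ℝ)) ^ d * (M * ∏ i : Fin d, F (θ i)) := by
        congr 1
        rw [← Finset.mul_sum]
        congr 1
        rw [← Fintype.piFinset_univ,
          ← Finset.prod_univ_sum (fun _ : Fin d => (Finset.univ : Finset (Fin N)))
            (fun i (j : Fin N) => ‖vpKer n (N - n) (θ i - 2 * Real.pi * ((j:ℕ):ℝ) / N)‖)]
        apply Finset.prod_congr rfl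
        intro i _
        rw [hF]
        rw [Fin.sum_univ_eq_sum_range (fun j : ℕ =>
          ‖vpKer n (N - n) (θ i - 2 * Real.pi * (j:ℝ) / N)‖)]
    _ ≤ (1 / (N:ℝ)) ^ d * (M * S ^ d) := by
        apply mul_le_mul_of_nonneg_left _ (by positivity)
        apply mul_le_mul_of_nonneg_left _ hMnonneg
        calc ∏ i : Fin d, F (θ i) ≤ ∏ _i : Fin d, S :=
              Finset.prod_le_prod (fun i _ => hFnonneg _) (fun i _ => hFle _)
          _ = S ^ d := by rw [Finset.prod_const, Finset.card_univ, Fintype.card_fin]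
    _ = ((1 / (N:ℝ)) * S) ^ d * M := by rw [mul_pow]; ring
end

section
/- Let d ≥ 1, n ≥ 0 be integers, let m > n and N ≥ n + m be integers, and let p be a d-variate trigonometric polynomial of degree at most n. Then for every θ ∈ ℝ^d, p(θ) = N^{−d} Σ_{θ_k ∈ Θ_N^d} p(θ_k) · D_{n,m}^d(θ − θ_k). -/
noncomputable def cexpE (j : ℤ) (t : ℝ) : ℂ := Complex.exp (Complex.I * (j : ℂ) * (t : ℂ))

lemma cexpE_shift (j q : ℤ) (θ t : ℝ) :
    cexpE j t * cexpE q (θ - t) = cexpE q θ * cexpE (j - q) t := by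
  unfold cexpE
  rw [← Complex.exp_add, ← Complex.exp_add]
  congr 1
  push_cast
  ring

lemma geom_lemma (N : ℕ) (hN : 1 ≤ N) (r : ℤ) :
    ∑ a : Fin N, cexpE r (2 * Real.pi * (a : ℝ) / N) =
      if (N : ℤ) ∣ r then (N : ℂ) else 0 := by
  have hN0 : (N : ℂ) ≠ 0 := Nat.cast_ne_zero.mpr (by omega)
  set ζ : ℂ := Complex.exp (2 * Real.pi * Complex.I * r / N) with hζ
  have hz : ∀ a : ℕ, cexpE r (2 * Real.pi * (a : ℝ) / N) = ζ ^ a := by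
    intro a
    rw [hζ, ← Complex.exp_nat_mul]
    unfold cexpE
    congr 1
    push_cast
    field_simp
  have hsum : ∑ a : Fin N, cexpE r (2 * Real.pi * (a : ℝ) / N)
      = ∑ a ∈ Finset.range N, ζ ^ a := by
    rw [← Fin.sum_univ_eq_sum_range]
    exact Finset.sum_congr rfl fun a _ => hz a
  rw [hsum]
  by_cases hdvd : (N : ℤ) ∣ r
  · obtain ⟨c, rfl⟩ := hdvd
    have hz1 : ζ = 1 := by
      rw [hζ]
      have : 2 * Real.pi * Complex.I * (↑(N * c) : ℂ) / N = c * (2 * Real.pi * Complex.I) := by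
        push_cast
        field_simp
      rw [this, Complex.exp_int_mul_two_pi_mul_I]
    simp [hz1]
  · have hpi : (Real.pi : ℂ) ≠ 0 := Complex.ofReal_ne_zero.mpr Real.pi_ne_zero
    have hc2 : (2 : ℂ) * Real.pi * Complex.I ≠ 0 := by
      simp [hpi, Complex.I_ne_zero]
    have hz1 : ζ ≠ 1 := by
      intro h
      rw [hζ, Complex.exp_eq_one_iff] at h
      obtain ⟨k, hk⟩ := h
      apply hdvd
      refine ⟨k, ?_⟩
      have h2 : (r : ℂ) = (N : ℂ) * k := by
        field_simp at hk
        apply mul_left_cancel₀ hc2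
        linear_combination (2 * Real.pi * Complex.I) * hk
      exact_mod_cast h2
    have hzN : ζ ^ N = 1 := by
      rw [hζ, ← Complex.exp_nat_mul]
      have : (N : ℂ) * (2 * Real.pi * Complex.I * r / N) = r * (2 * Real.pi * Complex.I) := by
        field_simp
      rw [this, Complex.exp_int_mul_two_pi_mul_I]
    rw [if_neg hdvd, geom_sum_eq hz1, hzN]
    simp

lemma key_lemma (n m N : ℕ) (hm : n < m) (hN : n + m ≤ N) (j : ℤ)
    (hj : j ∈ Finset.Icc (-(n : ℤ)) (n : ℤ)) (θ : ℝ) :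
    ∑ a : Fin N, cexpE j (2 * Real.pi * (a : ℝ) / N) *
        vpKer n m (θ - 2 * Real.pi * (a : ℝ) / N) = (N : ℂ) * cexpE j θ := by
  have hN1 : 1 ≤ N := by omega
  simp only [Finset.mem_Icc] at hj
  set C : ℂ := 1 / ((m : ℂ) - (n : ℂ)) with hC
  set g : Fin N → ℝ := fun a => 2 * Real.pi * (a : ℝ) / N with hg
  have expand : ∀ a : Fin N, cexpE j (g a) * vpKer n m (θ - g a)
      = ∑ l ∈ Finset.Ico n m, ∑ q ∈ Finset.Icc (-(l : ℤ)) (l : ℤ),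
          C * (cexpE q θ * cexpE (j - q) (g a)) := by
    intro a
    have hvp : vpKer n m (θ - g a) =
        C * ∑ l ∈ Finset.Ico n m,
          ∑ q ∈ Finset.Icc (-(l : ℤ)) (l : ℤ), cexpE q (θ - g a) := rfl
    rw [hvp, Finset.mul_sum, Finset.mul_sum]
    refine Finset.sum_congr rfl fun l _ => ?_
    rw [Finset.mul_sum, Finset.mul_sum]
    refine Finset.sum_congr rfl fun q _ => ?_
    linear_combination C * cexpE_shift j q θ (g a)
  calc ∑ a : Fin N, cexpE j (g a) * vpKer n m (θ - g a)
      = ∑ l ∈ Finset.Ico n m, ∑ q ∈ Finset.Icc (-(l : ℤ)) (l : ℤ), ∑ a : Fin N,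
          C * (cexpE q θ * cexpE (j - q) (g a)) := by
        rw [Finset.sum_congr rfl fun a _ => expand a, Finset.sum_comm]
        exact Finset.sum_congr rfl fun l _ => Finset.sum_comm
    _ = ∑ l ∈ Finset.Ico n m, ∑ q ∈ Finset.Icc (-(l : ℤ)) (l : ℤ),
          (if q = j then C * ((N : ℂ) * cexpE j θ) else 0) := by
        refine Finset.sum_congr rfl fun l hl => Finset.sum_congr rfl fun q hq => ?_
        simp only [Finset.mem_Ico] at hl
        simp only [Finset.mem_Icc] at hq
        rw [← Finset.mul_sum, ← Finset.mul_sum, geom_lemma N hN1 (j - q)]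
        by_cases hqj : q = j
        · subst hqj
          rw [if_pos (show ((N : ℕ) : ℤ) ∣ q - q from by simp), if_pos rfl]
          ring
        · rw [if_neg, if_neg hqj, mul_zero, mul_zero]
          intro hdvd
          have habs : |j - q| < (N : ℤ) := by
            rw [abs_lt]
            omega
          have := Int.eq_zero_of_abs_lt_dvd hdvd habs
          omega
    _ = ∑ l ∈ Finset.Ico n m, (C * ((N : ℂ) * cexpE j θ)) := by
        refine Finset.sum_congr rfl fun l hl => ?_
        simp only [Finset.mem_Ico] at hl
        rw [Finset.sum_ite_eq' _ j, if_pos]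
        simp only [Finset.mem_Icc]
        omega
    _ = (N : ℂ) * cexpE j θ := by
        rw [Finset.sum_const, Nat.card_Ico, nsmul_eq_mul, hC]
        have hmn : ((m : ℂ) - (n : ℂ)) = ((m - n : ℕ) : ℂ) := by
          push_cast [Nat.cast_sub hm.le]
          ring
        have hne : ((m - n : ℕ) : ℂ) ≠ 0 := Nat.cast_ne_zero.mpr (by omega)
        rw [hmn]
        field_simp

lemma exp_eq_prod (d : ℕ) (j : Fin d → ℤ) (θ : Fin d → ℝ) :
    Complex.exp (Complex.I * ((∑ i, (j i : ℝ) * θ i : ℝ) : ℂ)) =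
      ∏ i, cexpE (j i) (θ i) := by
  unfold cexpE
  rw [← Complex.exp_sum]
  congr 1
  push_cast
  rw [Finset.mul_sum]
  exact Finset.sum_congr rfl fun i _ => by ring

theorem stmt3 (d n m N : ℕ) (hd : 1 ≤ d) (hm : n < m) (hN : n + m ≤ N)
    (p : (Fin d → ℝ) → ℂ) (hp : IsTrigPoly d n p) :
    ∀ θ : Fin d → ℝ, p θ = ((N : ℂ) ^ d)⁻¹ *
      ∑ k : Fin d → Fin N, p (trigGrid N k) *
        ∏ i, vpKer n m (θ i - trigGrid N k i) := by
  obtain ⟨c, hc⟩ := hp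
  intro θ
  have hN1 : 1 ≤ N := by omega
  have hNd : ((N : ℂ) ^ d) ≠ 0 := pow_ne_zero _ (Nat.cast_ne_zero.mpr (by omega))
  have key : ∑ k : Fin d → Fin N, p (trigGrid N k) *
        ∏ i, vpKer n m (θ i - trigGrid N k i)
      = (N : ℂ) ^ d * p θ := by
    simp only [hc, trigGrid, Finset.sum_mul]
    rw [Finset.sum_comm, Finset.mul_sum]
    refine Finset.sum_congr rfl fun j hj => ?_
    have hj' : ∀ i, j i ∈ Finset.Icc (-(n : ℤ)) (n : ℤ) :=
      fun i => Fintype.mem_piFinset.mp hj i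
    calc ∑ k : Fin d → Fin N,
          c j * Complex.exp (Complex.I *
            ((∑ i, (j i : ℝ) * (2 * Real.pi * (k i : ℝ) / N) : ℝ) : ℂ)) *
            ∏ i, vpKer n m (θ i - 2 * Real.pi * (k i : ℝ) / N)
        = c j * ∑ k : Fin d → Fin N,
            ∏ i, (cexpE (j i) (2 * Real.pi * (k i : ℝ) / N) *
              vpKer n m (θ i - 2 * Real.pi * (k i : ℝ) / N)) := by
          rw [Finset.mul_sum]
          refine Finset.sum_congr rfl fun k _ => ?_
          rw [exp_eq_prod, Finset.prod_mul_distrib]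
          ring
      _ = c j * ∏ i, ∑ a : Fin N,
            (cexpE (j i) (2 * Real.pi * (a : ℝ) / N) *
              vpKer n m (θ i - 2 * Real.pi * (a : ℝ) / N)) := by
          rw [Finset.prod_univ_sum, Fintype.piFinset_univ]
      _ = c j * ∏ i, ((N : ℂ) * cexpE (j i) (θ i)) := by
          congr 1
          exact Finset.prod_congr rfl fun i _ =>
            key_lemma n m N hm hN (j i) (hj' i) (θ i)
      _ = (N : ℂ) ^ d * (c j * Complex.exp (Complex.I *
            ((∑ i, (j i : ℝ) * θ i : ℝ) : ℂ))) := by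
          rw [Finset.prod_mul_distrib, Finset.prod_const, Finset.card_univ,
            Fintype.card_fin, exp_eq_prod]
          ring
  rw [key, inv_mul_cancel_left₀ hNd]
end

section
/- Let 0 ≤ n < m be integers and let N ≥ n + m be an integer. Then for every t ∈ ℝ, Σ_{j=0}^{N−1} |D_{n,m}(t − 2πj/N)| ≤ N · sqrt( (m+n)/(m−n) ). -/
/-- auxiliary: the geometric sum `Σ_{k<L} e^{ikt}`. -/
noncomputable def geomK (L : ℕ) (t : ℝ) : ℂ :=
  ∑ k ∈ Finset.range L, Complex.exp (Complex.I * t) ^ k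

lemma geomK_one (t : ℝ) : geomK 1 t = 1 := by simp [geomK]

lemma geomK_succ (L : ℕ) (t : ℝ) :
    geomK (L + 1) t = geomK L t + Complex.exp (Complex.I * t) ^ L :=
  Finset.sum_range_succ _ _

lemma geomK_add (a b : ℕ) (t : ℝ) :
    geomK (a + b) t = geomK a t + Complex.exp (Complex.I * t) ^ a * geomK b t := by
  rw [geomK, Finset.sum_range_add, geomK, geomK, Finset.mul_sum]
  congr 1
  exact Finset.sum_congr rfl fun i _ => (pow_add _ _ _)

lemma geomK_mul (L : ℕ) (t : ℝ) :
    geomK L t * (Complex.exp (Complex.I * t) - 1) = Complex.exp (Complex.I * t) ^ L - 1 :=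
  geom_sum_mul _ _

lemma dirichlet_mul (l : ℕ) (t : ℝ) :
    Complex.exp (Complex.I * t) ^ l * dirichletKer l t = geomK (2 * l + 1) t := by
  have hE : Complex.exp (Complex.I * t) ≠ 0 := Complex.exp_ne_zero _
  have h1 : ∀ k : ℤ, Complex.exp (Complex.I * (k : ℂ) * (t : ℂ))
      = Complex.exp (Complex.I * t) ^ k := by
    intro k
    rw [← Complex.exp_int_mul]
    ring_nf
  have hmap : Finset.Icc (-(l : ℤ)) (l : ℤ)
      = Finset.map ⟨fun j : ℕ => (j : ℤ) - l, by intro a b h; simp only at h; omega⟩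
          (Finset.range (2 * l + 1)) := by
    ext x
    simp only [Finset.mem_map, Finset.mem_range, Finset.mem_Icc,
      Function.Embedding.coeFn_mk]
    constructor
    · rintro ⟨h1, h2⟩
      exact ⟨(x + l).toNat, by omega, by erw [Function.Embedding.coeFn_mk]; omega⟩
    · rintro ⟨a, ha, rfl⟩
      erw [Function.Embedding.coeFn_mk]; omega
  rw [dirichletKer, geomK, Finset.mul_sum, hmap, Finset.sum_map]
  refine Finset.sum_congr rfl fun j hj => ?_
  erw [Function.Embedding.coeFn_mk]
  rw [h1, ← zpow_natCast (Complex.exp (Complex.I * t)) l, ← zpow_add₀ hE,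
    ← zpow_natCast (Complex.exp (Complex.I * t)) j]
  congr 1
  ring

lemma key (n : ℕ) (t : ℝ) : ∀ m : ℕ, n < m →
    Complex.exp (Complex.I * t) ^ (m - 1) * ∑ l ∈ Finset.Ico n m, dirichletKer l t
      = geomK (m + n) t * geomK (m - n) t := by
  intro m hm
  induction m, hm using Nat.le_induction with
  | base =>
    rw [show n + 1 - 1 = n from rfl, show n + 1 - n = 1 by omega, geomK_one, mul_one,
      show n + 1 + n = 2 * n + 1 by omega, Finset.sum_Ico_eq_sum_range]
    simp only [show n + 1 - n = 1 by omega, Finset.sum_range_one, Nat.add_zero]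
    exact dirichlet_mul n t
  | succ m hm ih =>
    have hn : n ≤ m := by omega
    rw [show m + 1 - 1 = m from rfl, Finset.sum_Ico_succ_top hn,
      show m + 1 + n = (m + n) + 1 by omega, show m + 1 - n = (m - n) + 1 by omega,
      geomK_succ, geomK_succ]
    have hsplit : Complex.exp (Complex.I * t) ^ m
        = Complex.exp (Complex.I * t) * Complex.exp (Complex.I * t) ^ (m - 1) := by
      conv_lhs => rw [show m = 1 + (m - 1) by omega]
      rw [pow_add, pow_one]
    have hD := dirichlet_mul m t
    have e1 : geomK (2 * m + 1) t
        = geomK (m - n) t + Complex.exp (Complex.I * t) ^ (m - n) * geomK ((m + n) + 1) t := by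
      rw [← geomK_add]
      congr 1
      omega
    have e2 : geomK ((m + n) + 1) t = geomK (m + n) t + Complex.exp (Complex.I * t) ^ (m + n) :=
      geomK_succ _ _
    have e3 := geomK_mul (m + n) t
    linear_combination (∑ l ∈ Finset.Ico n m, dirichletKer l t) * hsplit
      + Complex.exp (Complex.I * t) * ih + hD + e1
      + Complex.exp (Complex.I * t) ^ (m - n) * e2 + geomK (m - n) t * e3

lemma abs_exp_I_mul (t : ℝ) : ‖Complex.exp (Complex.I * t)‖ = 1 := by
  rw [Complex.norm_exp]
  simp [Complex.mul_re]

lemma abs_vp (n m : ℕ) (hm : n < m) (t : ℝ) :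
    ‖vpKer n m t‖
      = ‖geomK (m + n) t‖ * ‖geomK (m - n) t‖ / ((m - n : ℕ) : ℝ) := by
  have h := congrArg (‖·‖) (key n t m hm)
  rw [norm_mul, norm_pow, abs_exp_I_mul, one_pow, one_mul, norm_mul] at h
  rw [vpKer, norm_mul, h, norm_div, norm_one]
  rw [show (m : ℂ) - (n : ℂ) = ((m - n : ℕ) : ℂ) by push_cast [Nat.cast_sub hm.le]; ring]
  rw [Complex.norm_natCast]
  ring

lemma cross_sum (N : ℕ) (hN : 0 < N) (t : ℝ) (k : ℤ) (hk0 : k ≠ 0)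
    (hk1 : -(N : ℤ) < k) (hk2 : k < N) :
    ∑ j ∈ Finset.range N, Complex.exp (Complex.I * k * ((t - 2 * Real.pi * j / N : ℝ) : ℂ)) = 0 := by
  have hNC : (N : ℂ) ≠ 0 := Nat.cast_ne_zero.mpr hN.ne'
  set w : ℂ := Complex.exp (Complex.I * k * (-2 * Real.pi / N)) with hw
  have hterm : ∀ j : ℕ, Complex.exp (Complex.I * k * ((t - 2 * Real.pi * j / N : ℝ) : ℂ))
      = Complex.exp (Complex.I * k * t) * w ^ j := by
    intro j
    rw [hw, ← Complex.exp_nat_mul, ← Complex.exp_add]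
    congr 1
    push_cast
    field_simp
    ring
  have hwN : w ^ N = 1 := by
    rw [hw, ← Complex.exp_nat_mul,
      show (N : ℂ) * (Complex.I * k * (-2 * Real.pi / N)) = ((-k : ℤ) : ℂ) * (2 * Real.pi * Complex.I) by
        push_cast; field_simp]
    exact Complex.exp_int_mul_two_pi_mul_I (-k)
  have hw1 : w ≠ 1 := by
    intro h
    rw [hw, Complex.exp_eq_one_iff] at h
    obtain ⟨q, hq⟩ := h
    have him := congrArg Complex.im hq
    simp [Complex.mul_im, Complex.mul_re] at him
    -- him should say : k * (-2π/N) = q * 2π (in some form)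
    have hNR : (N : ℝ) ≠ 0 := Nat.cast_ne_zero.mpr hN.ne'
    field_simp at him
    have h2 : (-(k : ℝ)) * (2 * Real.pi) = ((q : ℝ) * (N : ℝ)) * (2 * Real.pi) := by
      linear_combination (2 * Real.pi) * him
    have h3 : (-(k : ℝ)) = (q : ℝ) * (N : ℝ) :=
      mul_right_cancel₀ (by positivity) h2
    have hkz : -k = q * N := by exact_mod_cast h3
    have hNZ : (0 : ℤ) < (N : ℤ) := by exact_mod_cast hN
    have hq1 : -1 < q := by nlinarith
    have hq2 : q < 1 := by nlinarith
    have : q = 0 := by omega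
    subst this
    simp at hkz
    exact hk0 hkz
  calc ∑ j ∈ Finset.range N, Complex.exp (Complex.I * k * ((t - 2 * Real.pi * j / N : ℝ) : ℂ))
      = ∑ j ∈ Finset.range N, Complex.exp (Complex.I * k * t) * w ^ j :=
        Finset.sum_congr rfl fun j _ => hterm j
    _ = Complex.exp (Complex.I * k * t) * ((w ^ N - 1) / (w - 1)) := by
        rw [← Finset.mul_sum, geom_sum_eq hw1]
    _ = 0 := by rw [hwN]; simp

lemma parseval (L N : ℕ) (hL : L ≤ N) (hN : 0 < N) (t : ℝ) :
    ∑ j ∈ Finset.range N, ‖geomK L (t - 2 * Real.pi * j / N)‖ ^ 2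
      = (N : ℝ) * L := by
  have expand : ∀ s : ℝ, geomK L s * (starRingEnd ℂ) (geomK L s)
      = ∑ a ∈ Finset.range L, ∑ b ∈ Finset.range L,
          Complex.exp (Complex.I * (((a : ℤ) - b : ℤ) : ℂ) * (s : ℂ)) := by
    intro s
    rw [geomK, map_sum, Finset.sum_mul_sum]
    refine Finset.sum_congr rfl fun a _ => Finset.sum_congr rfl fun b _ => ?_
    rw [map_pow, ← Complex.exp_conj]
    rw [show (starRingEnd ℂ) (Complex.I * s) = -(Complex.I * s) by
      simp [map_mul, Complex.conj_I, Complex.conj_ofReal]]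
    rw [← Complex.exp_nat_mul, ← Complex.exp_nat_mul, ← Complex.exp_add]
    congr 1
    push_cast
    ring
  have main : ∑ j ∈ Finset.range N,
      geomK L (t - 2 * Real.pi * j / N) * (starRingEnd ℂ) (geomK L (t - 2 * Real.pi * j / N))
      = ((N : ℂ) * L) := by
    calc ∑ j ∈ Finset.range N,
        geomK L (t - 2 * Real.pi * j / N) * (starRingEnd ℂ) (geomK L (t - 2 * Real.pi * j / N))
        = ∑ j ∈ Finset.range N, ∑ a ∈ Finset.range L, ∑ b ∈ Finset.range L,
            Complex.exp (Complex.I * (((a : ℤ) - b : ℤ) : ℂ) * ((t - 2 * Real.pi * j / N : ℝ) : ℂ)) :=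
          Finset.sum_congr rfl fun j _ => expand _
      _ = ∑ a ∈ Finset.range L, ∑ b ∈ Finset.range L, ∑ j ∈ Finset.range N,
            Complex.exp (Complex.I * (((a : ℤ) - b : ℤ) : ℂ) * ((t - 2 * Real.pi * j / N : ℝ) : ℂ)) := by
          rw [Finset.sum_comm]
          exact Finset.sum_congr rfl fun a _ => Finset.sum_comm
      _ = ∑ a ∈ Finset.range L, ∑ b ∈ Finset.range L, if a = b then (N : ℂ) else 0 := by
          refine Finset.sum_congr rfl fun a ha => Finset.sum_congr rfl fun b hb => ?_
          by_cases hab : a = b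
          · subst hab
            simp
          · rw [if_neg hab]
            refine cross_sum N hN t ((a : ℤ) - b) ?_ ?_ ?_
            · simp only [Finset.mem_range] at ha hb
              omega
            · simp only [Finset.mem_range] at ha hb
              omega
            · simp only [Finset.mem_range] at ha hb
              omega
      _ = ((N : ℂ) * L) := by
          simp only [Finset.sum_ite_eq, Finset.mem_range]
          have h : ∀ x ∈ Finset.range L, (if x < L then (N : ℂ) else 0) = (N : ℂ) :=
            fun x hx => if_pos (Finset.mem_range.mp hx)
          rw [Finset.sum_congr rfl h, Finset.sum_const, Finset.card_range, nsmul_eq_mul]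
          ring
  have : ((∑ j ∈ Finset.range N,
      ‖geomK L (t - 2 * Real.pi * j / N)‖ ^ 2 : ℝ) : ℂ) = ((N : ℝ) * L : ℝ) := by
    push_cast
    rw [← main]
    refine Finset.sum_congr rfl fun j _ => ?_
    rw [Complex.mul_conj, ← Complex.ofReal_pow, Complex.sq_norm]
  exact_mod_cast this

theorem stmt6 (n m N : ℕ) (hm : n < m) (hN : n + m ≤ N) :
    ∀ t : ℝ, ∑ j ∈ Finset.range N,
        ‖vpKer n m (t - 2 * Real.pi * (j : ℝ) / N)‖ ≤
      (N : ℝ) * Real.sqrt (((m : ℝ) + n) / ((m : ℝ) - n)) := by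
  intro t
  have hM0 : 0 < m - n := by omega
  have hN0 : 0 < N := by omega
  have hMR : (0 : ℝ) < ((m - n : ℕ) : ℝ) := by exact_mod_cast hM0
  set f : ℕ → ℝ := fun j => ‖geomK (m + n) (t - 2 * Real.pi * j / N)‖
  set g : ℕ → ℝ := fun j => ‖geomK (m - n) (t - 2 * Real.pi * j / N)‖
  have step1 : ∑ j ∈ Finset.range N, ‖vpKer n m (t - 2 * Real.pi * (j : ℝ) / N)‖
      = (∑ j ∈ Finset.range N, f j * g j) / ((m - n : ℕ) : ℝ) := by
    rw [Finset.sum_div]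
    exact Finset.sum_congr rfl fun j _ => abs_vp n m hm _
  have hfg : 0 ≤ ∑ j ∈ Finset.range N, f j * g j :=
    Finset.sum_nonneg fun j _ => mul_nonneg (norm_nonneg _) (norm_nonneg _)
  have CS := Finset.sum_mul_sq_le_sq_mul_sq (Finset.range N) f g
  have hP1 : ∑ j ∈ Finset.range N, f j ^ 2 = (N : ℝ) * ((m : ℝ) + n) := by
    have h := parseval (m + n) N (by omega) hN0 t
    push_cast at h
    simpa [f] using h
  have hP2 : ∑ j ∈ Finset.range N, g j ^ 2 = (N : ℝ) * ((m - n : ℕ) : ℝ) := by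
    have h := parseval (m - n) N (by omega) hN0 t
    simpa [g] using h
  have step2 : ∑ j ∈ Finset.range N, f j * g j
      ≤ Real.sqrt ((N : ℝ) * ((m : ℝ) + n) * ((N : ℝ) * ((m - n : ℕ) : ℝ))) := by
    rw [show ((N : ℝ) * ((m : ℝ) + n) * ((N : ℝ) * ((m - n : ℕ) : ℝ)))
      = (∑ j ∈ Finset.range N, f j ^ 2) * ∑ j ∈ Finset.range N, g j ^ 2 by rw [hP1, hP2]]
    exact (Real.le_sqrt hfg (by positivity)).mpr CS
  have hmn : ((m - n : ℕ) : ℝ) = (m : ℝ) - n := by push_cast [Nat.cast_sub hm.le]; ring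
  have hMn : (0 : ℝ) < (m : ℝ) - n := by rw [← hmn]; exact hMR
  have hsq : Real.sqrt ((N : ℝ) * ((m : ℝ) + n) * ((N : ℝ) * ((m - n : ℕ) : ℝ))) / ((m - n : ℕ) : ℝ)
      = (N : ℝ) * Real.sqrt (((m : ℝ) + n) / ((m : ℝ) - n)) := by
    rw [hmn]
    rw [show ((N : ℝ) * ((m : ℝ) + n) * ((N : ℝ) * ((m : ℝ) - n)))
      = (N : ℝ) ^ 2 * ((((m : ℝ) + n) / ((m : ℝ) - n)) * ((m : ℝ) - n) ^ 2) by
        field_simp]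
    rw [Real.sqrt_mul (by positivity), Real.sqrt_mul (by positivity),
      Real.sqrt_sq (by positivity), Real.sqrt_sq hMn.le]
    field_simp
  calc ∑ j ∈ Finset.range N, ‖vpKer n m (t - 2 * Real.pi * (j : ℝ) / N)‖
      = (∑ j ∈ Finset.range N, f j * g j) / ((m - n : ℕ) : ℝ) := step1
    _ ≤ Real.sqrt ((N : ℝ) * ((m : ℝ) + n) * ((N : ℝ) * ((m - n : ℕ) : ℝ))) / ((m - n : ℕ) : ℝ) := by
        gcongr
    _ = (N : ℝ) * Real.sqrt (((m : ℝ) + n) / ((m : ℝ) - n)) := hsq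
end

section
/- Let d ≥ 1, n ≥ 1 and N ≥ 2n+1 be integers, let p be a real d-variate trigonometric polynomial of degree at most n, set α = 2n/N, and set A = max_{θ_k ∈ Θ_N^d} p(θ_k) and B = min_{θ_k ∈ Θ_N^d} p(θ_k). Then for every θ ∈ ℝ^d, p(θ) ≤ (1/2) ( A + B + (1 − α)^{−d/2} (A − B) ). -/
open Complex Finset


noncomputable def ee (x : ℝ) : ℂ := Complex.exp (Complex.I * x)

lemma ee_add (x y : ℝ) : ee (x + y) = ee x * ee y := by
  rw [ee, ee, ee, ← Complex.exp_add]
  congr 1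
  push_cast
  ring

lemma ee_zero : ee 0 = 1 := by simp [ee]

lemma ee_int_mul (k : ℤ) (x : ℝ) : ee (k * x) = ee x ^ k := by
  rw [ee, ee, ← Complex.exp_int_mul]
  congr 1
  push_cast
  ring

lemma ee_nat_mul (k : ℕ) (x : ℝ) : ee (k * x) = ee x ^ k := by
  have := ee_int_mul (k : ℤ) x
  rw [zpow_natCast] at this
  simpa using this

lemma ee_ne_zero (x : ℝ) : ee x ≠ 0 := Complex.exp_ne_zero _

lemma ee_neg (x : ℝ) : ee (-x) = (ee x)⁻¹ := by
  rw [ee, ee, ← Complex.exp_neg]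
  congr 1
  push_cast
  ring

lemma ee_neg_mul (x : ℝ) : ee (-x) * ee x = 1 := by
  rw [ee_neg]; exact inv_mul_cancel₀ (ee_ne_zero x)

lemma conj_ee (x : ℝ) : (starRingEnd ℂ) (ee x) = ee (-x) := by
  rw [ee, ee, ← Complex.exp_conj]
  congr 1
  simp

lemma norm_ee (x : ℝ) : ‖ee x‖ = 1 := by
  rw [ee]
  rw [show Complex.I * (x:ℝ) = (x:ℝ) * Complex.I by ring]
  exact Complex.norm_exp_ofReal_mul_I x

lemma ee_eq_one_iff (x : ℝ) : ee x = 1 ↔ ∃ m : ℤ, x = m * (2 * Real.pi) := by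
  rw [ee, Complex.exp_eq_one_iff]
  constructor
  · rintro ⟨m, hm⟩
    refine ⟨m, ?_⟩
    have : ((x : ℂ)) = ((m * (2 * Real.pi) : ℝ) : ℂ) := by
      apply mul_left_cancel₀ Complex.I_ne_zero
      rw [hm]; push_cast; ring
    exact_mod_cast this
  · rintro ⟨m, hm⟩
    refine ⟨m, ?_⟩
    rw [hm]; push_cast; ring

-- roots of unity sum
lemma sum_ee_grid (N : ℕ) (hN : 0 < N) (r : ℤ) :
    ∑ j ∈ Finset.range N, ee (r * (2 * Real.pi * j / N)) =
      if (N:ℤ) ∣ r then (N:ℂ) else 0 := by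
  have hNR : (N:ℝ) ≠ 0 := by positivity
  have hz : ∀ j : ℕ, ee (r * (2 * Real.pi * j / N)) = ee (r * (2 * Real.pi / N)) ^ j := by
    intro j
    rw [← ee_nat_mul]
    congr 1
    ring
  simp only [hz]
  set z := ee (r * (2 * Real.pi / N)) with hzdef
  have hz1 : z = 1 ↔ (N:ℤ) ∣ r := by
    rw [hzdef, ee_eq_one_iff]
    constructor
    · rintro ⟨m, hm⟩
      have hr : (r:ℝ) = m * N := by
        field_simp at hm
        have hpi : (2:ℝ) * Real.pi ≠ 0 := by positivity
        nlinarith [Real.pi_pos]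
      refine ⟨m, ?_⟩
      have h2 : (r:ℝ) = ((N:ℤ) * m : ℤ) := by push_cast; linarith
      exact_mod_cast h2
    · rintro ⟨m, rfl⟩
      exact ⟨m, by push_cast; field_simp⟩
  have hzN : z ^ N = 1 := by
    rw [hzdef, ← ee_nat_mul, ee_eq_one_iff]
    exact ⟨r, by field_simp⟩
  by_cases hdvd : (N:ℤ) ∣ r
  · rw [if_pos hdvd, hz1.mpr hdvd]
    simp
  · rw [if_neg hdvd]
    have : z ≠ 1 := fun h => hdvd (hz1.mp h)
    rw [geom_sum_eq this, hzN]
    simp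

noncomputable def Gk (L : ℕ) (s : ℝ) : ℂ := ∑ j ∈ Finset.range L, ee (j * s)

lemma dk_term (k : ℤ) (t : ℝ) :
    Complex.exp (Complex.I * (k : ℂ) * (t : ℂ)) = ee (k * t) := by
  rw [ee]; congr 1; push_cast; ring

lemma dk_succ (l : ℕ) (t : ℝ) :
    dirichletKer (l+1) t = dirichletKer l t + ee ((l+1) * t) + ee (-((l+1) * t)) := by
  have hset : Finset.Icc (-(l+1:ℕ) : ℤ) ((l+1:ℕ) : ℤ) =
      insert (-(l+1:ℕ) : ℤ) (insert ((l+1:ℕ) : ℤ) (Finset.Icc (-(l:ℕ) : ℤ) (l : ℤ))) := by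
    ext x
    simp only [Finset.mem_Icc, Finset.mem_insert]
    push_cast
    omega
  rw [dirichletKer, dirichletKer, hset]
  rw [Finset.sum_insert (by simp only [Finset.mem_insert, Finset.mem_Icc]; push_cast; omega),
    Finset.sum_insert (by simp only [Finset.mem_Icc]; push_cast; omega)]
  rw [dk_term, dk_term]
  simp only [dk_term]
  push_cast
  ring

lemma dk_eq (l : ℕ) (t : ℝ) :
    dirichletKer l t = 1 + ∑ j ∈ Finset.range l, (ee ((j+1) * t) + ee (-((j+1) * t))) := by
  induction l with
  | zero =>
    simp [dirichletKer]
  | succ l ih =>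
    rw [dk_succ, ih, Finset.sum_range_succ]
    push_cast
    ring

lemma fejer (L : ℕ) (s : ℝ) :
    ∑ l ∈ Finset.range L, dirichletKer l s = Gk L s * (starRingEnd ℂ) (Gk L s) := by
  induction L with
  | zero => simp [Gk]
  | succ L ih =>
    have Gk_succ : Gk (L+1) s = Gk L s + ee (L * s) := Finset.sum_range_succ _ _
    rw [Finset.sum_range_succ, ih, Gk_succ]
    rw [map_add, conj_ee]
    have expand : (Gk L s + ee (L * s)) * ((starRingEnd ℂ) (Gk L s) + ee (-(L * s))) =
        Gk L s * (starRingEnd ℂ) (Gk L s) + ee (L * s) * (starRingEnd ℂ) (Gk L s)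
          + ee (-(L * s)) * Gk L s + ee (-(L*s)) * ee (L*s) := by ring
    rw [expand, ee_neg_mul]
    have h1 : ee (L * s) * (starRingEnd ℂ) (Gk L s)
        = ∑ j ∈ Finset.range L, ee ((j+1) * s) := by
      rw [Gk, map_sum, Finset.mul_sum]
      rw [← Finset.sum_range_reflect (fun j => ee ((j+1) * s)) L]
      apply Finset.sum_congr rfl
      intro j hj
      rw [Finset.mem_range] at hj
      rw [conj_ee, ← ee_add]
      congr 1
      rw [show (L - 1 - j : ℕ) = L - (j+1) from by omega]
      have hc : ((L - (j+1) : ℕ) : ℝ) = (L:ℝ) - (j+1) := by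
        rw [Nat.cast_sub (by omega)]; push_cast; ring
      rw [hc]; ring
    have h2 : ee (-(L * s)) * Gk L s
        = ∑ j ∈ Finset.range L, ee (-((j+1) * s)) := by
      rw [Gk, Finset.mul_sum]
      rw [← Finset.sum_range_reflect (fun j => ee (-((j+1) * s))) L]
      apply Finset.sum_congr rfl
      intro j hj
      rw [Finset.mem_range] at hj
      rw [← ee_add]
      congr 1
      rw [show (L - 1 - j : ℕ) = L - (j+1) from by omega]
      have hc : ((L - (j+1) : ℕ) : ℝ) = (L:ℝ) - (j+1) := by
        rw [Nat.cast_sub (by omega)]; push_cast; ring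
      rw [hc]; ring
    rw [h1, h2, dk_eq]
    rw [Finset.sum_add_distrib]
    ring

noncomputable def FR (L : ℕ) (s : ℝ) : ℝ := Complex.normSq (Gk L s)

lemma fejer_real (L : ℕ) (s : ℝ) :
    ∑ l ∈ Finset.range L, dirichletKer l s = ((FR L s : ℝ) : ℂ) := by
  rw [fejer, Complex.mul_conj, FR]

lemma FR_nonneg (L : ℕ) (s : ℝ) : 0 ≤ FR L s := Complex.normSq_nonneg _

lemma geom_rel (L : ℕ) (s : ℝ) : (ee s - 1) * Gk L s = ee (L * s) - 1 := by
  induction L with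
  | zero => simp [Gk, ee_zero]
  | succ L ih =>
    rw [Gk, Finset.sum_range_succ, ← Gk, mul_add, ih]
    have : ((L+1:ℕ):ℝ) * s = s + (L:ℝ)*s := by push_cast; ring
    rw [this, ee_add]
    ring

lemma geom_rel' (L : ℕ) (s : ℝ) :
    (ee (-s) - 1) * (starRingEnd ℂ) (Gk L s) = ee (-((L:ℝ) * s)) - 1 := by
  have := congrArg (starRingEnd ℂ) (geom_rel L s)
  rw [map_mul, map_sub, map_one, map_sub, map_one, conj_ee, conj_ee] at this
  exact this

lemma key_alg (a b : ℂ) (ha : a ≠ 0) (hb : b ≠ 0) :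
    ((a*b-1)*(a⁻¹*b⁻¹-1) - (a-1)*(a⁻¹-1))^2
      = ((a^2*b-1)*((a^2*b)⁻¹-1)) * ((b-1)*(b⁻¹-1)) := by
  field_simp
  ring

lemma ee_eq_one_pow (s : ℝ) (h : ee s = 1) (k : ℕ) : ee (k * s) = 1 := by
  rw [ee_nat_mul, h, one_pow]

lemma hq_lemma (L : ℕ) (s : ℝ) : ((FR L s : ℝ) : ℂ) * ((ee s - 1) * (ee (-s) - 1))
    = (ee ((L:ℝ)*s) - 1) * (ee (-((L:ℝ)*s)) - 1) := by
  have h0 : ((FR L s : ℝ) : ℂ) = Gk L s * (starRingEnd ℂ) (Gk L s) := by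
    rw [FR, Complex.mul_conj]
  rw [h0]
  calc Gk L s * (starRingEnd ℂ) (Gk L s) * ((ee s - 1) * (ee (-s) - 1))
      = ((ee s - 1) * Gk L s) * ((ee (-s) - 1) * (starRingEnd ℂ) (Gk L s)) := by ring
    _ = (ee ((L:ℝ)*s) - 1) * (ee (-((L:ℝ)*s)) - 1) := by rw [geom_rel, geom_rel']

lemma FR_identity (m n : ℕ) (h : n ≤ m) (s : ℝ) :
    (FR m s - FR n s)^2 = FR (m+n) s * FR (m-n) s := by
  obtain ⟨k, rfl⟩ := Nat.exists_eq_add_of_le h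
  rw [show n + k - n = k from by omega]
  by_cases h1 : ee s = 1
  · have hF : ∀ L : ℕ, FR L s = (L:ℝ)^2 := by
      intro L
      rw [FR, Gk]
      rw [Finset.sum_congr rfl (fun j _ => ee_eq_one_pow s h1 j)]
      simp only [Finset.sum_const, Finset.card_range, nsmul_eq_mul, mul_one]
      rw [show ((L:ℂ)) = ((L:ℝ):ℂ) by push_cast; ring, Complex.normSq_ofReal]
      ring
    rw [hF, hF, hF, hF]
    push_cast
    ring
  · set a := ee ((n:ℝ) * s) with hadef
    set b := ee ((k:ℝ) * s) with hbdef
    have ha0 : a ≠ 0 := ee_ne_zero _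
    have hb0 : b ≠ 0 := ee_ne_zero _
    have hE : (ee s - 1) * (ee (-s) - 1) ≠ 0 := by
      apply mul_ne_zero (sub_ne_zero.mpr h1)
      apply sub_ne_zero.mpr
      intro hc
      apply h1
      have h2 : ee (-s) * ee s = 1 := ee_neg_mul s
      rw [hc, one_mul] at h2
      exact h2
    set E := (ee s - 1) * (ee (-s) - 1) with hEdef
    have hab : ee (((n+k:ℕ):ℝ) * s) = a * b := by
      rw [hadef, hbdef, ← ee_add]; congr 1; push_cast; ring
    have hab' : ee (-(((n+k:ℕ):ℝ) * s)) = a⁻¹ * b⁻¹ := by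
      rw [ee_neg, hab, mul_inv]
    have ha2b : ee ((((n+k)+n:ℕ):ℝ) * s) = a^2 * b := by
      rw [show ((((n+k)+n:ℕ):ℝ) * s) = (n:ℝ)*s + ((n:ℝ)*s + (k:ℝ)*s) from by push_cast; ring,
        ee_add, ee_add, ← hadef, ← hbdef]
      ring
    have ha2b' : ee (-((((n+k)+n:ℕ):ℝ) * s)) = (a^2 * b)⁻¹ := by
      rw [ee_neg, ha2b]
    have han : ee (-((n:ℝ) * s)) = a⁻¹ := by rw [ee_neg]
    have hbn : ee (-((k:ℝ) * s)) = b⁻¹ := by rw [ee_neg]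
    have q1 := hq_lemma (n+k) s
    have q2 := hq_lemma n s
    have q3 := hq_lemma ((n+k)+n) s
    have q4 := hq_lemma k s
    rw [hab, hab'] at q1
    rw [← hadef, han] at q2
    rw [ha2b, ha2b'] at q3
    rw [← hbdef, hbn] at q4
    have main : (((FR (n+k) s - FR n s)^2 : ℝ) : ℂ) * E^2
        = (((FR ((n+k)+n) s * FR k s : ℝ)) : ℂ) * E^2 := by
      have lhs : (((FR (n+k) s - FR n s)^2 : ℝ) : ℂ) * E^2
          = (((FR (n+k) s : ℝ):ℂ) * E - ((FR n s : ℝ):ℂ) * E)^2 := by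
        push_cast; ring
      have rhs : (((FR ((n+k)+n) s * FR k s : ℝ)) : ℂ) * E^2
          = (((FR ((n+k)+n) s : ℝ):ℂ) * E) * (((FR k s : ℝ):ℂ) * E) := by
        push_cast; ring
      rw [lhs, rhs, q1, q2, q3, q4]
      exact key_alg a b ha0 hb0
    have main2 := mul_right_cancel₀ (pow_ne_zero 2 hE) main
    exact_mod_cast main2

lemma sum_ee_shift (N : ℕ) (hN : 0 < N) (k : ℤ) (t : ℝ) :
    ∑ j ∈ Finset.range N, ee (k * (t - 2 * Real.pi * j / N))
      = ee (k * t) * (if (N:ℤ) ∣ k then (N:ℂ) else 0) := by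
  have h : ∀ j : ℕ, ee (k * (t - 2 * Real.pi * j / N))
      = ee (k * t) * ee (((-k : ℤ) : ℝ) * (2 * Real.pi * j / N)) := by
    intro j
    rw [← ee_add]
    congr 1
    push_cast
    ring
  simp only [h]
  rw [← Finset.mul_sum, sum_ee_grid N hN (-k)]
  congr 1
  simp [dvd_neg]

lemma sum_dirichlet_grid (N l : ℕ) (hl : l < N) (t : ℝ) :
    ∑ j ∈ Finset.range N, dirichletKer l (t - 2 * Real.pi * j / N) = (N:ℂ) := by
  have hN : 0 < N := lt_of_le_of_lt (Nat.zero_le l) hl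
  simp only [dirichletKer, dk_term]
  rw [Finset.sum_comm]
  have hterm : ∀ r : ℤ, r ∈ Finset.Icc (-(l:ℤ)) (l:ℤ) →
      ∑ j ∈ Finset.range N, ee (r * (t - 2 * Real.pi * j / N))
        = if r = 0 then (N:ℂ) else 0 := by
    intro r hr
    rw [Finset.mem_Icc] at hr
    rw [sum_ee_shift N hN r t]
    by_cases h0 : r = 0
    · subst h0
      simp [ee_zero]
    · rw [if_neg h0]
      rw [if_neg, mul_zero]
      intro hdvd
      have habs : (N:ℤ) ≤ |r| := Int.le_of_dvd (abs_pos.mpr h0) ((dvd_abs _ _).mpr hdvd)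
      have : |r| ≤ (l:ℤ) := abs_le.mpr hr
      omega
  rw [Finset.sum_congr rfl hterm, Finset.sum_ite_eq' _ (0:ℤ)]
  simp

lemma sum_FR_grid (N L : ℕ) (hL : L ≤ N) (hN : 0 < N) (t : ℝ) :
    ∑ j ∈ Finset.range N, FR L (t - 2 * Real.pi * j / N) = (N:ℝ) * L := by
  have hC : ∑ j ∈ Finset.range N, ((FR L (t - 2 * Real.pi * j / N) : ℝ) : ℂ)
      = (((N:ℝ) * L : ℝ) : ℂ) := by
    have h1 : ∀ j : ℕ, ((FR L (t - 2 * Real.pi * j / N) : ℝ) : ℂ)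
        = ∑ l ∈ Finset.range L, dirichletKer l (t - 2 * Real.pi * j / N) :=
      fun j => (fejer_real L _).symm
    simp only [h1]
    rw [Finset.sum_comm]
    have h2 : ∀ l ∈ Finset.range L,
        ∑ j ∈ Finset.range N, dirichletKer l (t - 2 * Real.pi * j / N) = (N:ℂ) := by
      intro l hl
      exact sum_dirichlet_grid N l (lt_of_lt_of_le (Finset.mem_range.mp hl) hL) t
    rw [Finset.sum_congr rfl h2]
    simp only [Finset.sum_const, Finset.card_range, nsmul_eq_mul]
    push_cast
    ring
  rw [← Complex.ofReal_sum] at hC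
  exact_mod_cast hC

lemma sum_ee_dirichlet (N l : ℕ) (hN : 0 < N) (k : ℤ) (hk : |k| ≤ (l:ℤ))
    (hlk : (l:ℤ) + |k| < (N:ℤ)) (t : ℝ) :
    ∑ j ∈ Finset.range N, ee (k * (2 * Real.pi * j / N)) * dirichletKer l (t - 2 * Real.pi * j / N)
      = (N:ℂ) * ee (k * t) := by
  simp only [dirichletKer, dk_term, Finset.mul_sum]
  rw [Finset.sum_comm]
  have hterm : ∀ r : ℤ, r ∈ Finset.Icc (-(l:ℤ)) (l:ℤ) →
      ∑ j ∈ Finset.range N, ee (k * (2 * Real.pi * j / N)) * ee (r * (t - 2 * Real.pi * j / N))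
        = if r = k then (N:ℂ) * ee (k * t) else 0 := by
    intro r hr
    rw [Finset.mem_Icc] at hr
    have hcomb : ∀ j : ℕ, ee (k * (2 * Real.pi * j / N)) * ee (r * (t - 2 * Real.pi * j / N))
        = ee (r * t) * ee (((k - r : ℤ) : ℝ) * (2 * Real.pi * j / N)) := by
      intro j
      rw [← ee_add, ← ee_add]
      congr 1
      push_cast
      ring
    simp only [hcomb]
    rw [← Finset.mul_sum, sum_ee_grid N hN (k - r)]
    by_cases heq : r = k
    · subst heq
      simp
      ring
    · have hnd : ¬ (N:ℤ) ∣ (k - r) := by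
        intro hdvd
        have h0 : k - r ≠ 0 := fun hc => heq (by omega)
        have habs : (N:ℤ) ≤ |k - r| := Int.le_of_dvd (abs_pos.mpr h0) ((dvd_abs _ _).mpr hdvd)
        have h1 : |k - r| ≤ |k| + |r| := abs_sub k r
        have h2 : |r| ≤ (l:ℤ) := abs_le.mpr hr
        omega
      rw [if_neg heq, if_neg hnd, mul_zero]
  rw [Finset.sum_congr rfl hterm, Finset.sum_ite_eq' _ k]
  rw [if_pos]
  rw [Finset.mem_Icc]
  constructor <;> [linarith [neg_abs_le k, hk]; linarith [le_abs_self k, hk]]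

/-- per-dimension reproduction -/
lemma vp_reproduce (N n : ℕ) (h2n : 2*n+1 ≤ N) (k : ℤ) (hk : |k| ≤ (n:ℤ)) (t : ℝ) :
    ∑ j ∈ Finset.range N, ee (k * (2 * Real.pi * j / N)) * vpKer n (N-n) (t - 2 * Real.pi * j / N)
      = (N:ℂ) * ee (k * t) := by
  have hN : 0 < N := by omega
  have hMcast : ((N-n:ℕ):ℂ) - (n:ℂ) = ((N-2*n:ℕ):ℂ) := by
    push_cast [Nat.cast_sub (by omega : n ≤ N), Nat.cast_sub (by omega : 2*n ≤ N)]
    ring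
  have hM0 : ((N-2*n:ℕ):ℂ) ≠ 0 := Nat.cast_ne_zero.mpr (by omega)
  simp only [vpKer, Finset.mul_sum, mul_left_comm, hMcast]
  rw [Finset.sum_comm]
  simp only [← Finset.mul_sum]
  have hinner : ∀ l ∈ Finset.Ico n (N-n),
      ∑ j ∈ Finset.range N, ee (k * (2 * Real.pi * j / N)) * dirichletKer l (t - 2 * Real.pi * j / N)
        = (N:ℂ) * ee (k * t) := by
    intro l hl
    rw [Finset.mem_Ico] at hl
    apply sum_ee_dirichlet N l hN k (le_trans hk (by exact_mod_cast hl.1))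
    have h1 : (l:ℤ) ≤ (N:ℤ) - (n:ℤ) - 1 := by
      have := hl.2
      omega
    omega
  rw [Finset.sum_congr rfl hinner]
  simp only [Finset.sum_const, Nat.card_Ico, nsmul_eq_mul]
  have hcard : ((N - n - n : ℕ):ℂ) = ((N - 2*n : ℕ):ℂ) := by norm_cast; omega
  rw [hcard]
  rw [← mul_assoc, one_div, inv_mul_cancel₀ hM0, one_mul]

lemma vp_as_FR (N n : ℕ) (h2n : 2*n+1 ≤ N) (s : ℝ) :
    vpKer n (N-n) s = (((FR (N-n) s - FR n s) / ((N:ℝ) - 2*n) : ℝ) : ℂ) := by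
  have hMcast : ((N-n:ℕ):ℂ) - (n:ℂ) = (((N:ℝ) - 2*n : ℝ):ℂ) := by
    push_cast [Nat.cast_sub (by omega : n ≤ N)]
    ring
  have hM0 : (((N:ℝ) - 2*n : ℝ):ℂ) ≠ 0 := by
    have : (0:ℝ) < (N:ℝ) - 2*n := by
      have : (2*n+1 : ℝ) ≤ N := by exact_mod_cast h2n
      linarith
    simp only [ne_eq, Complex.ofReal_eq_zero]
    linarith
  rw [vpKer, hMcast]
  rw [Finset.sum_Ico_eq_sub _ (by omega : n ≤ N - n)]
  rw [fejer_real, fejer_real]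
  push_cast
  field_simp

lemma vp_l1_bound (N n : ℕ) (h2n : 2*n+1 ≤ N) (t : ℝ) :
    ∑ j ∈ Finset.range N, ‖vpKer n (N-n) (t - 2 * Real.pi * j / N)‖
      ≤ (N:ℝ) * Real.sqrt ((N:ℝ) / ((N:ℝ) - 2*n)) := by
  have hN : 0 < N := by omega
  have hM : (0:ℝ) < (N:ℝ) - 2*n := by
    have : (2*n+1 : ℝ) ≤ N := by exact_mod_cast h2n
    linarith
  have hNpos : (0:ℝ) < N := by exact_mod_cast hN
  -- pointwise rewrite
  have hpt : ∀ j : ℕ, ‖vpKer n (N-n) (t - 2 * Real.pi * j / N)‖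
      = Real.sqrt (FR N (t - 2 * Real.pi * j / N)) *
        Real.sqrt (FR (N-2*n) (t - 2 * Real.pi * j / N)) / ((N:ℝ) - 2*n) := by
    intro j
    set s := t - 2 * Real.pi * j / N
    rw [vp_as_FR N n h2n s, Complex.norm_real, Real.norm_eq_abs, abs_div, abs_of_pos hM]
    congr 1
    have hid := FR_identity (N-n) n (by omega : n ≤ N - n) s
    rw [show N - n + n = N from by omega, show N - n - n = N - 2*n from by omega] at hid
    rw [← Real.sqrt_mul (FR_nonneg N s), ← hid, Real.sqrt_sq_eq_abs]
  simp only [hpt]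
  rw [← Finset.sum_div]
  rw [div_le_iff₀ hM]
  -- Cauchy-Schwarz
  have hcs := Finset.sum_mul_sq_le_sq_mul_sq (Finset.range N)
    (fun j => Real.sqrt (FR N (t - 2 * Real.pi * j / N)))
    (fun j => Real.sqrt (FR (N-2*n) (t - 2 * Real.pi * j / N)))
  simp only [Real.sq_sqrt (FR_nonneg _ _)] at hcs
  rw [sum_FR_grid N N le_rfl hN t, sum_FR_grid N (N-2*n) (by omega) hN t] at hcs
  have hS : (0:ℝ) ≤ ∑ j ∈ Finset.range N, Real.sqrt (FR N (t - 2 * Real.pi * j / N)) *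
      Real.sqrt (FR (N-2*n) (t - 2 * Real.pi * j / N)) :=
    Finset.sum_nonneg fun j _ => mul_nonneg (Real.sqrt_nonneg _) (Real.sqrt_nonneg _)
  have hRHS : (N:ℝ) * Real.sqrt ((N:ℝ) / ((N:ℝ) - 2*n)) * ((N:ℝ) - 2*n)
      = Real.sqrt (((N:ℝ) * N) * ((N:ℝ) * ((N - 2*n : ℕ):ℝ))) := by
    have hcast : ((N - 2*n : ℕ):ℝ) = (N:ℝ) - 2*n := by
      push_cast [Nat.cast_sub (by omega : 2*n ≤ N)]; ring
    rw [hcast]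
    rw [show ((N:ℝ) * N) * ((N:ℝ) * ((N:ℝ) - 2*n))
        = ((N:ℝ) * ((N:ℝ) - 2*n))^2 * ((N:ℝ) / ((N:ℝ) - 2*n)) from by field_simp]
    rw [Real.sqrt_mul (sq_nonneg _), Real.sqrt_sq (by positivity)]
    ring
  rw [hRHS]
  calc (∑ j ∈ Finset.range N, Real.sqrt (FR N (t - 2 * Real.pi * j / N)) *
          Real.sqrt (FR (N-2*n) (t - 2 * Real.pi * j / N)))
      = Real.sqrt ((∑ j ∈ Finset.range N, Real.sqrt (FR N (t - 2 * Real.pi * j / N)) *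
          Real.sqrt (FR (N-2*n) (t - 2 * Real.pi * j / N)))^2) := (Real.sqrt_sq hS).symm
    _ ≤ Real.sqrt (((N:ℝ) * N) * ((N:ℝ) * ((N - 2*n : ℕ):ℝ))) := Real.sqrt_le_sqrt hcs

lemma ee_sum {ι : Type*} (s : Finset ι) (f : ι → ℝ) :
    ee (∑ i ∈ s, f i) = ∏ i ∈ s, ee (f i) := by
  rw [ee, Complex.ofReal_sum, Finset.mul_sum, Complex.exp_sum]
  rfl

lemma swapC {d N : ℕ} {β : Type*} [CommSemiring β] (g : Fin d → Fin N → β) :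
    ∑ k : Fin d → Fin N, ∏ i, g i (k i) = ∏ i, ∑ a : Fin N, g i a := by
  rw [Finset.prod_univ_sum, Fintype.piFinset_univ]

theorem stmt9 (d n N : ℕ) (hd : 1 ≤ d) (hn : 1 ≤ n) (hN : 2 * n + 1 ≤ N)
    (p : (Fin d → ℝ) → ℝ) (hp : IsTrigPoly d n (fun θ => (p θ : ℂ)))
    (α : ℝ) (hα : α = 2 * n / N) (A B : ℝ)
    (hA : IsGreatest (Set.range fun k : Fin d → Fin N => p (trigGrid N k)) A)
    (hB : IsLeast (Set.range fun k : Fin d → Fin N => p (trigGrid N k)) B) :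
    ∀ θ : Fin d → ℝ, p θ ≤ (1 / 2) * (A + B + (1 - α) ^ (-(d : ℝ) / 2) * (A - B)) := by
  intro θ
  have hNpos : 0 < N := by omega
  have hNR : (0:ℝ) < N := by exact_mod_cast hNpos
  have hMR : (0:ℝ) < (N:ℝ) - 2*n := by
    have : (2*n+1 : ℝ) ≤ N := by exact_mod_cast hN
    linarith
  have hNC : (N:ℂ) ≠ 0 := Nat.cast_ne_zero.mpr (by omega)
  obtain ⟨c, hc⟩ := hp
  set w : (Fin d → Fin N) → ℂ :=
    fun k => ∏ i, ((1/(N:ℂ)) * vpKer n (N-n) (θ i - 2 * Real.pi * (k i : ℕ) / N)) with hw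
  -- per-dimension reproduction
  have per_dim : ∀ (kk : ℤ), |kk| ≤ (n:ℤ) → ∀ t : ℝ,
      ∑ a : Fin N, ee (kk * (2 * Real.pi * (a:ℕ) / N)) *
        ((1/(N:ℂ)) * vpKer n (N-n) (t - 2 * Real.pi * (a:ℕ) / N)) = ee (kk * t) := by
    intro kk hkk t
    rw [Fin.sum_univ_eq_sum_range (fun a : ℕ => ee (kk * (2 * Real.pi * a / N)) *
      ((1/(N:ℂ)) * vpKer n (N-n) (t - 2 * Real.pi * a / N))) N]
    have hterm : ∀ a : ℕ, ee (kk * (2 * Real.pi * a / N)) *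
        ((1/(N:ℂ)) * vpKer n (N-n) (t - 2 * Real.pi * a / N))
        = (1/(N:ℂ)) * (ee (kk * (2 * Real.pi * a / N)) * vpKer n (N-n) (t - 2 * Real.pi * a / N)) := by
      intro a; ring
    simp only [hterm]
    rw [← Finset.mul_sum, vp_reproduce N n hN kk hkk t]
    field_simp
  -- (O) : sum of weights is 1
  have hw1 : ∑ k : Fin d → Fin N, w k = 1 := by
    rw [hw]
    rw [swapC (fun i a => (1/(N:ℂ)) * vpKer n (N-n) (θ i - 2 * Real.pi * (a:ℕ) / N))]
    have hone : ∀ i : Fin d, ∑ a : Fin N,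
        (1/(N:ℂ)) * vpKer n (N-n) (θ i - 2 * Real.pi * (a:ℕ) / N) = 1 := by
      intro i
      have h0 := per_dim 0 (by simp) (θ i)
      simp only [Int.cast_zero, zero_mul, ee_zero, one_mul] at h0
      exact h0
    rw [Finset.prod_congr rfl (fun i _ => hone i)]
    simp
  -- (R) : reproduction
  have hR : (p θ : ℂ) = ∑ k : Fin d → Fin N, (p (trigGrid N k) : ℂ) * w k := by
    have grid_expand : ∀ j : Fin d → Fin N, (p (trigGrid N j) : ℂ)
        = ∑ kk ∈ Fintype.piFinset (fun _ : Fin d => Finset.Icc (-(n : ℤ)) (n : ℤ)),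
            c kk * ∏ i, ee ((kk i : ℝ) * (2 * Real.pi * (j i : ℕ) / N)) := by
      intro j
      rw [show (p (trigGrid N j) : ℂ) = (fun θ' => (p θ' : ℂ)) (trigGrid N j) from rfl, hc]
      apply Finset.sum_congr rfl
      intro kk _
      congr 1
      rw [show Complex.exp (Complex.I * ((∑ i, (kk i : ℝ) * trigGrid N j i : ℝ) : ℂ))
          = ee (∑ i, (kk i : ℝ) * trigGrid N j i) from rfl]
      rw [ee_sum]
      apply Finset.prod_congr rfl
      intro i _
      rfl
    calc (p θ : ℂ) = ∑ kk ∈ Fintype.piFinset (fun _ : Fin d => Finset.Icc (-(n : ℤ)) (n : ℤ)),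
        c kk * Complex.exp (Complex.I * ((∑ i, (kk i : ℝ) * θ i : ℝ) : ℂ)) := by
          exact hc θ
      _ = ∑ kk ∈ Fintype.piFinset (fun _ : Fin d => Finset.Icc (-(n : ℤ)) (n : ℤ)),
        c kk * ∏ i, ee ((kk i : ℝ) * θ i) := by
          apply Finset.sum_congr rfl
          intro kk _
          congr 1
          rw [show Complex.exp (Complex.I * ((∑ i, (kk i : ℝ) * θ i : ℝ) : ℂ))
            = ee (∑ i, (kk i : ℝ) * θ i) from rfl]
          rw [ee_sum]
      _ = ∑ kk ∈ Fintype.piFinset (fun _ : Fin d => Finset.Icc (-(n : ℤ)) (n : ℤ)),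
        c kk * ∏ i, (∑ a : Fin N, ee ((kk i : ℝ) * (2 * Real.pi * (a:ℕ) / N)) *
          ((1/(N:ℂ)) * vpKer n (N-n) (θ i - 2 * Real.pi * (a:ℕ) / N))) := by
          apply Finset.sum_congr rfl
          intro kk hkk
          congr 1
          apply Finset.prod_congr rfl
          intro i _
          have hki : kk i ∈ Finset.Icc (-(n:ℤ)) (n:ℤ) := by
            exact Fintype.mem_piFinset.mp hkk i
          rw [Finset.mem_Icc] at hki
          exact (per_dim (kk i) (abs_le.mpr hki) (θ i)).symm
      _ = ∑ kk ∈ Fintype.piFinset (fun _ : Fin d => Finset.Icc (-(n : ℤ)) (n : ℤ)),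
        c kk * ∑ j : Fin d → Fin N, ∏ i, (ee ((kk i : ℝ) * (2 * Real.pi * (j i : ℕ) / N)) *
          ((1/(N:ℂ)) * vpKer n (N-n) (θ i - 2 * Real.pi * (j i : ℕ) / N))) := by
          apply Finset.sum_congr rfl
          intro kk _
          congr 1
          exact (swapC _).symm
      _ = ∑ j : Fin d → Fin N, ∑ kk ∈ Fintype.piFinset (fun _ : Fin d => Finset.Icc (-(n : ℤ)) (n : ℤ)),
        c kk * ∏ i, (ee ((kk i : ℝ) * (2 * Real.pi * (j i : ℕ) / N)) *
          ((1/(N:ℂ)) * vpKer n (N-n) (θ i - 2 * Real.pi * (j i : ℕ) / N))) := by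
          simp only [Finset.mul_sum]
          rw [Finset.sum_comm]
      _ = ∑ j : Fin d → Fin N, (p (trigGrid N j) : ℂ) * w j := by
          apply Finset.sum_congr rfl
          intro j _
          rw [grid_expand j, hw, Finset.sum_mul]
          apply Finset.sum_congr rfl
          intro kk _
          rw [mul_assoc, ← Finset.prod_mul_distrib]
  -- (S) : weight L1 bound
  set K : ℝ := Real.sqrt ((N:ℝ) / ((N:ℝ) - 2*n)) with hK
  have hS : ∑ k : Fin d → Fin N, ‖w k‖ ≤ K ^ d := by
    have habs : ∀ k : Fin d → Fin N, ‖w k‖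
        = ∏ i, ‖(1/(N:ℂ)) * vpKer n (N-n) (θ i - 2 * Real.pi * (k i : ℕ) / N)‖ := by
      intro k
      rw [hw]
      exact Complex.norm_prod _ _
    simp only [habs]
    rw [swapC (fun i a => ‖(1/(N:ℂ)) * vpKer n (N-n) (θ i - 2 * Real.pi * (a:ℕ) / N)‖)]
    have hdim : ∀ i : Fin d, ∑ a : Fin N,
        ‖(1/(N:ℂ)) * vpKer n (N-n) (θ i - 2 * Real.pi * (a:ℕ) / N)‖ ≤ K := by
      intro i
      have heq : ∀ a : Fin N, ‖(1/(N:ℂ)) * vpKer n (N-n) (θ i - 2 * Real.pi * (a:ℕ) / N)‖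
          = (1/(N:ℝ)) * ‖vpKer n (N-n) (θ i - 2 * Real.pi * (a:ℕ) / N)‖ := by
        intro a
        rw [norm_mul]
        congr 1
        rw [show (1/(N:ℂ)) = (((1/(N:ℝ)):ℝ):ℂ) from by push_cast; ring, Complex.norm_real, Real.norm_eq_abs]
        rw [abs_of_pos (by positivity)]
      simp only [heq]
      rw [← Finset.mul_sum]
      rw [Fin.sum_univ_eq_sum_range (fun a : ℕ =>
        ‖vpKer n (N-n) (θ i - 2 * Real.pi * a / N)‖) N]
      have := vp_l1_bound N n hN (θ i)
      calc (1/(N:ℝ)) * ∑ a ∈ Finset.range N, ‖vpKer n (N-n) (θ i - 2 * Real.pi * a / N)‖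
          ≤ (1/(N:ℝ)) * ((N:ℝ) * K) := by
            apply mul_le_mul_of_nonneg_left _ (by positivity)
            exact this
        _ = K := by field_simp
    calc ∏ i : Fin d, ∑ a : Fin N,
          ‖(1/(N:ℂ)) * vpKer n (N-n) (θ i - 2 * Real.pi * (a:ℕ) / N)‖
        ≤ ∏ i : Fin d, K := by
          apply Finset.prod_le_prod
          · intro i _
            apply Finset.sum_nonneg
            intro a _
            exact norm_nonneg _
          · intro i _
            exact hdim i
      _ = K ^ d := by rw [Finset.prod_const]; simp
  -- grid values bounded
  have hBA : B ≤ A := hA.2 hB.1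
  have hgrid : ∀ k : Fin d → Fin N, |p (trigGrid N k) - (A+B)/2| ≤ (A-B)/2 := by
    intro k
    have h1 : p (trigGrid N k) ≤ A := hA.2 (Set.mem_range_self k)
    have h2 : B ≤ p (trigGrid N k) := hB.2 (Set.mem_range_self k)
    rw [abs_le]
    constructor <;> [linarith; linarith]
  -- main estimate
  have hmain : p θ - (A+B)/2 ≤ (A-B)/2 * K ^ d := by
    have hsplit : ((p θ - (A+B)/2 : ℝ) : ℂ)
        = ∑ k : Fin d → Fin N, ((p (trigGrid N k) - (A+B)/2 : ℝ) : ℂ) * w k := by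
      have hterm : ∀ k : Fin d → Fin N,
          ((p (trigGrid N k) - (A+B)/2 : ℝ) : ℂ) * w k
          = (p (trigGrid N k) : ℂ) * w k - (((A+B)/2 : ℝ) : ℂ) * w k := by
        intro k; push_cast; ring
      rw [Finset.sum_congr rfl (fun k _ => hterm k), Finset.sum_sub_distrib,
        ← hR, ← Finset.mul_sum, hw1, mul_one]
      push_cast
      ring
    have hre : p θ - (A+B)/2
        = (((p θ - (A+B)/2 : ℝ) : ℂ)).re := (Complex.ofReal_re _).symm
    rw [hre, hsplit, Complex.re_sum]
    calc ∑ k : Fin d → Fin N, (((p (trigGrid N k) - (A+B)/2 : ℝ) : ℂ) * w k).re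
        ≤ ∑ k : Fin d → Fin N, ‖((p (trigGrid N k) - (A+B)/2 : ℝ) : ℂ) * w k‖ :=
          Finset.sum_le_sum (fun k _ => Complex.re_le_norm _)
      _ = ∑ k : Fin d → Fin N, |p (trigGrid N k) - (A+B)/2| * ‖w k‖ := by
          apply Finset.sum_congr rfl
          intro k _
          rw [norm_mul, Complex.norm_real, Real.norm_eq_abs]
      _ ≤ ∑ k : Fin d → Fin N, (A-B)/2 * ‖w k‖ := by
          apply Finset.sum_le_sum
          intro k _
          exact mul_le_mul_of_nonneg_right (hgrid k) (norm_nonneg _)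
      _ = (A-B)/2 * ∑ k : Fin d → Fin N, ‖w k‖ := by
          rw [Finset.mul_sum]
      _ ≤ (A-B)/2 * K ^ d := by
          apply mul_le_mul_of_nonneg_left hS
          linarith
  -- identify K^d with the rpow expression
  have h1a : 1 - α = ((N:ℝ) - 2*n)/N := by
    rw [hα]; field_simp
  have hpos : (0:ℝ) < 1 - α := by
    rw [h1a]; positivity
  have hKpow : K ^ d = (1 - α) ^ (-(d:ℝ)/2) := by
    have hx : (N:ℝ)/((N:ℝ) - 2*n) = (1-α)⁻¹ := by
      rw [h1a, inv_div]
    rw [hK, hx, Real.sqrt_eq_rpow]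
    rw [← Real.rpow_natCast ((1-α)⁻¹ ^ ((1:ℝ)/2)) d]
    rw [← Real.rpow_mul (inv_nonneg.mpr (le_of_lt hpos))]
    rw [Real.inv_rpow (le_of_lt hpos), ← Real.rpow_neg (le_of_lt hpos)]
    congr 1
    ring
  rw [hKpow] at hmain
  linarith
end

section
/- Let d ≥ 1, n ≥ 0 and N ≥ 2n+1 be integers, let p be a real d-variate trigonometric polynomial of degree at most n, and set A = max_{θ_k ∈ Θ_N^d} p(θ_k) and B = min_{θ_k ∈ Θ_N^d} p(θ_k). Suppose C > 1 is a real number such that every real d-variate trigonometric polynomial q of degree at most n satisfies sup_{θ ∈ ℝ^d} |q(θ)| ≤ C · max_{θ_k ∈ Θ_N^d} |q(θ_k)|. If p(θ_k) > 0 for all θ_k ∈ Θ_N^d and A/B < (C + 1)/(C − 1), then p(θ) > 0 for all θ ∈ ℝ^d. -/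
lemma isTrigPoly_const (d n : ℕ) (a : ℂ) : IsTrigPoly d n (fun _ => a) := by
  refine ⟨fun k => if k = 0 then a else 0, fun θ => ?_⟩
  have h0 : (0 : Fin d → ℤ) ∈ Fintype.piFinset
      (fun _ : Fin d => Finset.Icc (-(n : ℤ)) (n : ℤ)) := by
    simp [Fintype.mem_piFinset]
  rw [Finset.sum_eq_single (0 : Fin d → ℤ)]
  · simp
  · intro b _ hb; simp [hb]
  · intro h; exact absurd h0 h

lemma isTrigPoly_sub (d n : ℕ) (f g : (Fin d → ℝ) → ℂ) (hf : IsTrigPoly d n f)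
    (hg : IsTrigPoly d n g) : IsTrigPoly d n (fun θ => f θ - g θ) := by
  obtain ⟨c1, h1⟩ := hf
  obtain ⟨c2, h2⟩ := hg
  refine ⟨fun k => c1 k - c2 k, fun θ => ?_⟩
  simp [h1 θ, h2 θ, sub_mul, Finset.sum_sub_distrib]

theorem stmt12 (d n N : ℕ) (hd : 1 ≤ d) (hN : 2 * n + 1 ≤ N)
    (p : (Fin d → ℝ) → ℝ) (hp : IsTrigPoly d n (fun θ => (p θ : ℂ)))
    (A B : ℝ)
    (hA : IsGreatest (Set.range fun k : Fin d → Fin N => p (trigGrid N k)) A)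
    (hB : IsLeast (Set.range fun k : Fin d → Fin N => p (trigGrid N k)) B)
    (C : ℝ) (hC1 : 1 < C)
    (hC : ∀ q : (Fin d → ℝ) → ℝ, IsTrigPoly d n (fun θ => (q θ : ℂ)) →
      ∀ Mq : ℝ, IsGreatest (Set.range fun k : Fin d → Fin N => |q (trigGrid N k)|) Mq →
      ∀ θ : Fin d → ℝ, |q θ| ≤ C * Mq)
    (hpos : ∀ k : Fin d → Fin N, 0 < p (trigGrid N k))
    (hratio : A / B < (C + 1) / (C - 1)) :
    ∀ θ : Fin d → ℝ, 0 < p θ := by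
  intro θ
  haveI : Nonempty (Fin N) := ⟨⟨0, by omega⟩⟩
  -- B > 0
  obtain ⟨kB, hkB⟩ := hB.1
  have hBpos : 0 < B := hkB ▸ hpos kB
  have hAB : B ≤ A := by
    obtain ⟨kA, hkA⟩ := hA.1
    rw [← hkA]; exact hB.2 ⟨kA, rfl⟩
  have hCm : 0 < C - 1 := by linarith
  -- key inequality: C * (A - B) < A + B
  have hkey : C * (A - B) < A + B := by
    have h1 : A * (C - 1) < B * (C + 1) := by
      have := (div_lt_div_iff₀ hBpos (by linarith : (0:ℝ) < C - 1)).1 hratio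
      linarith
    nlinarith
  set μ : ℝ := (A + B) / 2 with hμ
  set q : (Fin d → ℝ) → ℝ := fun θ => p θ - μ with hq
  have hqtp : IsTrigPoly d n (fun θ => (q θ : ℂ)) := by
    have := isTrigPoly_sub d n (fun θ => (p θ : ℂ)) (fun _ => (μ : ℂ)) hp
      (isTrigPoly_const d n μ)
    convert this using 2
    push_cast [hq]
    ring
  -- Mq
  set s : Finset ℝ := Finset.univ.image (fun k : Fin d → Fin N => |q (trigGrid N k)|)
    with hs
  have hsne : s.Nonempty := ⟨_, Finset.mem_image.2 ⟨Classical.arbitrary _,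
    Finset.mem_univ _, rfl⟩⟩
  set Mq : ℝ := s.max' hsne with hMq
  have hMqG : IsGreatest (Set.range fun k : Fin d → Fin N => |q (trigGrid N k)|) Mq := by
    constructor
    · obtain ⟨k, _, hk⟩ := Finset.mem_image.1 (s.max'_mem hsne)
      exact ⟨k, hk⟩
    · rintro x ⟨k, rfl⟩
      exact Finset.le_max' s _ (Finset.mem_image.2 ⟨k, Finset.mem_univ _, rfl⟩)
  have hMqle : Mq ≤ (A - B) / 2 := by
    apply Finset.max'_le
    intro y hy
    obtain ⟨k, _, hk⟩ := Finset.mem_image.1 hy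
    have h1 : p (trigGrid N k) ≤ A := hA.2 ⟨k, rfl⟩
    have h2 : B ≤ p (trigGrid N k) := hB.2 ⟨k, rfl⟩
    rw [← hk, hq]
    rw [abs_le]
    constructor <;> simp [hμ] <;> linarith
  have hbound := hC q hqtp Mq hMqG θ
  have : |p θ - μ| ≤ C * ((A - B) / 2) := by
    calc |q θ| ≤ C * Mq := hbound
    _ ≤ C * ((A - B) / 2) := by
      apply mul_le_mul_of_nonneg_left hMqle (by linarith)
  have h3 := abs_le.1 this
  have : μ - C * ((A - B) / 2) > 0 := by
    rw [hμ]; linarith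
  linarith [h3.1]
end

section
/- Let d ≥ 1, n ≥ 1 and N ≥ 2n+1 be integers, let p be a real d-variate trigonometric polynomial of degree at most n, set α = 2n/N, and set A = max_{θ_k ∈ Θ_N^d} p(θ_k) and B = min_{θ_k ∈ Θ_N^d} p(θ_k). If p(θ_k) > 0 for all θ_k ∈ Θ_N^d and A/B < ( 1 + (1 − α)^{d/2} ) / ( 1 − (1 − α)^{d/2} ), then p(θ) > 0 for all θ ∈ ℝ^d. -/
namespace Stmt13Aux

open Complex Finset

/-- The "one-sided" geometric kernel `S_r(t) = Σ_{j<r} e^{ijt}`. -/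
noncomputable def Sker (r : ℕ) (t : ℝ) : ℂ :=
  ∑ j ∈ Finset.range r, Complex.exp (Complex.I * (j : ℂ) * (t : ℂ))

lemma exp_zpow (a : ℤ) (t : ℝ) :
    Complex.exp (Complex.I * (a : ℂ) * (t : ℂ)) = (Complex.exp (Complex.I * (t : ℂ))) ^ a := by
  rw [← Complex.exp_int_mul]; ring_nf

lemma dvd_small {Nz c : ℤ} (h : Nz ∣ c) (hc : |c| < Nz) : c = 0 := by
  rcases h with ⟨u, rfl⟩
  rcases eq_or_ne u 0 with rfl | hu
  · ring
  · exfalso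
    have h1 : (1:ℤ) ≤ |u| := Int.one_le_abs hu
    have h2 : 0 ≤ |Nz * u| := abs_nonneg _
    have h3 : 0 < Nz := lt_of_le_of_lt h2 hc
    rw [abs_mul, abs_of_pos h3] at hc
    nlinarith

lemma conj_exp_I (a : ℤ) (x : ℝ) :
    (starRingEnd ℂ) (Complex.exp (Complex.I * (a : ℂ) * (x : ℂ)))
      = Complex.exp (Complex.I * ((-a : ℤ) : ℂ) * (x : ℂ)) := by
  rw [← Complex.exp_conj]
  congr 1
  simp only [map_mul, Complex.conj_I, Complex.conj_ofReal, map_intCast]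
  push_cast
  ring

lemma exp_I_sub (a : ℤ) (x y : ℝ) :
    Complex.exp (Complex.I * (a : ℂ) * ((x - y : ℝ) : ℂ))
      = Complex.exp (Complex.I * (a : ℂ) * (x : ℂ)) * Complex.exp (Complex.I * ((-a : ℤ) : ℂ) * (y : ℂ)) := by
  rw [← Complex.exp_add]
  congr 1
  push_cast
  ring

lemma exp_I_comb (a b : ℤ) (x : ℝ) :
    Complex.exp (Complex.I * (a : ℂ) * (x : ℂ)) * Complex.exp (Complex.I * (b : ℂ) * (x : ℂ))
      = Complex.exp (Complex.I * ((a + b : ℤ) : ℂ) * (x : ℂ)) := by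
  rw [← Complex.exp_add]
  congr 1
  push_cast
  ring

lemma dft_sum (N : ℕ) (hN : 0 < N) (c : ℤ) :
    ∑ k : Fin N, Complex.exp (Complex.I * (c : ℂ) * ((2 * Real.pi * (k : ℝ) / N : ℝ) : ℂ))
      = if (N : ℤ) ∣ c then (N : ℂ) else 0 := by
  have hN0 : (N : ℝ) ≠ 0 := Nat.cast_ne_zero.mpr hN.ne'
  have hNC : (N : ℂ) ≠ 0 := Nat.cast_ne_zero.mpr hN.ne'
  set z : ℂ := Complex.exp (Complex.I * (c : ℂ) * ((2 * Real.pi / N : ℝ) : ℂ)) with hz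
  have hterm : ∀ k : Fin N,
      Complex.exp (Complex.I * (c : ℂ) * ((2 * Real.pi * (k : ℝ) / N : ℝ) : ℂ)) = z ^ (k : ℕ) := by
    intro k
    rw [hz, ← Complex.exp_nat_mul]
    congr 1
    push_cast
    field_simp
  simp only [hterm]
  have hzN : z ^ N = 1 := by
    rw [hz, ← Complex.exp_nat_mul]
    have : (N : ℂ) * (Complex.I * (c : ℂ) * ((2 * Real.pi / N : ℝ) : ℂ)) = (c : ℂ) * (2 * Real.pi * Complex.I) := by
      push_cast
      field_simp [hNC]
    rw [this, Complex.exp_int_mul_two_pi_mul_I]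
  by_cases hdvd : (N : ℤ) ∣ c
  · obtain ⟨u, rfl⟩ := hdvd
    have hz1 : z = 1 := by
      rw [hz]
      have : Complex.I * ((N * u : ℤ) : ℂ) * ((2 * Real.pi / N : ℝ) : ℂ) = (u : ℂ) * (2 * Real.pi * Complex.I) := by
        push_cast
        field_simp [hNC]
      rw [this, Complex.exp_int_mul_two_pi_mul_I]
    simp [hz1]
  · have hz1 : z ≠ 1 := by
      intro h
      rw [hz, Complex.exp_eq_one_iff] at h
      obtain ⟨u, hu⟩ := h
      apply hdvd
      have key : ((c * 2 * Real.pi / N : ℝ) : ℂ) * Complex.I = ((u * (2 * Real.pi) : ℝ) : ℂ) * Complex.I := by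
        push_cast at hu ⊢
        linear_combination hu
      have h2 := mul_right_cancel₀ Complex.I_ne_zero key
      have h3 : (c * 2 * Real.pi / N : ℝ) = (u * (2 * Real.pi) : ℝ) := Complex.ofReal_inj.mp h2
      have hc : (c : ℝ) = u * N := by
        field_simp at h3
        nlinarith [Real.pi_pos]
      have : c = u * N := by exact_mod_cast hc
      exact ⟨u, by linarith⟩
    rw [Fin.sum_univ_eq_sum_range (fun k => z ^ k), geom_sum_eq hz1, hzN]
    simp [hdvd]

lemma Sker_int (r : ℕ) (x : ℝ) :
    Sker r x = ∑ j ∈ Finset.range r, Complex.exp (Complex.I * ((j : ℤ) : ℂ) * (x : ℂ)) := by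
  unfold Sker
  apply Finset.sum_congr rfl
  intros j _
  norm_num

lemma sumSq (N r : ℕ) (hN : 0 < N) (hr : r ≤ N) (t : ℝ) :
    ∑ k : Fin N, Complex.normSq (Sker r (t - 2 * Real.pi * (k : ℝ) / N)) = (N : ℝ) * r := by
  have main : ∑ k : Fin N, (Sker r (t - 2 * Real.pi * (k : ℝ) / N)) *
      (starRingEnd ℂ) (Sker r (t - 2 * Real.pi * (k : ℝ) / N)) = (N : ℂ) * r := by
    have step1 : ∀ k : Fin N, (Sker r (t - 2 * Real.pi * (k : ℝ) / N)) *
        (starRingEnd ℂ) (Sker r (t - 2 * Real.pi * (k : ℝ) / N)) =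
        ∑ j ∈ Finset.range r, ∑ j' ∈ Finset.range r,
          Complex.exp (Complex.I * ((((j : ℤ) - j') : ℤ) : ℂ) * ((t : ℂ)))
            * Complex.exp (Complex.I * (((-((j : ℤ) - j')) : ℤ) : ℂ) * ((2 * Real.pi * (k : ℝ) / N : ℝ) : ℂ)) := by
      intro k
      rw [Sker_int, map_sum, Finset.sum_mul_sum]
      apply Finset.sum_congr rfl
      intro j _
      apply Finset.sum_congr rfl
      intro j' _
      rw [conj_exp_I, exp_I_comb]
      have : (j : ℤ) + -(j' : ℤ) = (j : ℤ) - j' := by ring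
      rw [this]
      exact exp_I_sub _ _ _
    rw [Finset.sum_congr rfl (fun k _ => step1 k), Finset.sum_comm]
    have step2 : ∀ j ∈ Finset.range r, (∑ k : Fin N, ∑ j' ∈ Finset.range r,
        Complex.exp (Complex.I * ((((j : ℤ) - j') : ℤ) : ℂ) * ((t : ℂ)))
          * Complex.exp (Complex.I * (((-((j : ℤ) - j')) : ℤ) : ℂ) * ((2 * Real.pi * (k : ℝ) / N : ℝ) : ℂ)))
        = (N : ℂ) := by
      intro j hj
      rw [Finset.sum_comm]
      have inner : ∀ j' ∈ Finset.range r,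
          (∑ k : Fin N, Complex.exp (Complex.I * ((((j : ℤ) - j') : ℤ) : ℂ) * ((t : ℂ)))
            * Complex.exp (Complex.I * (((-((j : ℤ) - j')) : ℤ) : ℂ) * ((2 * Real.pi * (k : ℝ) / N : ℝ) : ℂ)))
          = Complex.exp (Complex.I * ((((j : ℤ) - j') : ℤ) : ℂ) * ((t : ℂ)))
            * (if (N : ℤ) ∣ (-((j : ℤ) - j')) then (N : ℂ) else 0) := by
        intro j' _
        rw [← Finset.mul_sum, dft_sum N hN]
      rw [Finset.sum_congr rfl inner]
      rw [Finset.sum_eq_single_of_mem j hj]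
      · simp
      · intro j' hj' hne
        have hmem : j' ∈ Finset.range r := hj'
        have h1 : ¬ ((N : ℤ) ∣ (-((j : ℤ) - j'))) := by
          intro hdvd
          have habs : |(-((j : ℤ) - j'))| < (N : ℤ) := by
            have hjr : (j : ℤ) < r := by exact_mod_cast Finset.mem_range.mp hj
            have hjr' : (j' : ℤ) < r := by exact_mod_cast Finset.mem_range.mp hmem
            have hrN : (r : ℤ) ≤ N := by exact_mod_cast hr
            rw [abs_lt]
            constructor <;> omega
          have := dvd_small hdvd habs
          have : (j : ℤ) = j' := by omega
          exact hne (by exact_mod_cast this.symm)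
        rw [if_neg h1, mul_zero]
    rw [Finset.sum_congr rfl step2, Finset.sum_const, Finset.card_range]
    simp [mul_comm]
  have cast_eq : ((∑ k : Fin N, Complex.normSq (Sker r (t - 2 * Real.pi * (k : ℝ) / N)) : ℝ) : ℂ)
      = (((N : ℝ) * r : ℝ) : ℂ) := by
    push_cast
    rw [← main]
    rw [Finset.sum_congr rfl (fun k _ => (Complex.mul_conj _).symm)]
  exact_mod_cast cast_eq

lemma dirichlet_zpow (l : ℕ) (t : ℝ) :
    dirichletKer l t = ∑ a ∈ Finset.Icc (-(l : ℤ)) (l : ℤ), (Complex.exp (Complex.I * (t : ℂ))) ^ a := by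
  unfold dirichletKer
  exact Finset.sum_congr rfl fun a _ => exp_zpow a t

lemma Sker_pow (r : ℕ) (t : ℝ) :
    Sker r t = ∑ j ∈ Finset.range r, (Complex.exp (Complex.I * (t : ℂ))) ^ j := by
  unfold Sker
  apply Finset.sum_congr rfl
  intro j _
  rw [show ((j : ℂ)) = (((j : ℤ)) : ℂ) by push_cast; ring, exp_zpow, zpow_natCast]

lemma shift_dirichlet (m : ℕ) (t : ℝ) :
    (Complex.exp (Complex.I * (t : ℂ))) ^ m * dirichletKer m t
      = ∑ j ∈ Finset.range (2 * m + 1), (Complex.exp (Complex.I * (t : ℂ))) ^ j := by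
  set z := Complex.exp (Complex.I * (t : ℂ)) with hzdef
  have hz0 : z ≠ 0 := Complex.exp_ne_zero _
  rw [dirichlet_zpow, Finset.mul_sum]
  apply Finset.sum_nbij' (i := fun a => ((m : ℤ) + a).toNat) (j := fun j => (j : ℤ) - m)
  · intro a ha
    simp only [Finset.mem_Icc] at ha
    simp only [Finset.mem_range]
    omega
  · intro j hj
    simp only [Finset.mem_range] at hj
    simp only [Finset.mem_Icc]
    omega
  · intro a ha
    simp only [Finset.mem_Icc] at ha
    omega
  · intro j hj
    simp only [Finset.mem_range] at hj
    omega
  · intro a ha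
    simp only [Finset.mem_Icc] at ha
    rw [← zpow_natCast z (((m : ℤ) + a).toNat), Int.toNat_of_nonneg (by omega)]
    rw [← zpow_natCast z m, ← zpow_add₀ hz0]

lemma Qlem (n : ℕ) (t : ℝ) : ∀ b : ℕ,
    (Complex.exp (Complex.I * (t : ℂ))) ^ (n + b) * (Complex.exp (Complex.I * (t : ℂ)) - 1) ^ 2
        * (∑ l ∈ Finset.Ico n (n + b + 1), dirichletKer l t)
      = ((Complex.exp (Complex.I * (t : ℂ))) ^ (2 * n + b + 1) - 1)
        * ((Complex.exp (Complex.I * (t : ℂ))) ^ (b + 1) - 1) := by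
  set z := Complex.exp (Complex.I * (t : ℂ)) with hzdef
  have hgeom : ∀ r : ℕ, (∑ j ∈ Finset.range r, z ^ j) * (z - 1) = z ^ r - 1 := fun r => geom_sum_mul z r
  intro b
  induction b with
  | zero =>
    rw [show n + 0 + 1 = n + 1 from rfl, Finset.sum_Ico_eq_sum_range]
    simp only [Nat.add_sub_cancel_left, Finset.range_one, Finset.sum_singleton, Nat.add_zero]
    have h1 : z ^ n * (z - 1) ^ 2 * dirichletKer n t
        = (z ^ n * dirichletKer n t) * (z - 1) * (z - 1) := by ring
    rw [h1, shift_dirichlet, hgeom]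
    ring
  | succ b ih =>
    rw [show n + (b + 1) + 1 = n + b + 1 + 1 from rfl, show n + (b + 1) = n + b + 1 from rfl,
      Finset.sum_Ico_succ_top (by omega : n ≤ n + b + 1)]
    have expand : z ^ (n + b + 1) * (z - 1) ^ 2 *
        ((∑ l ∈ Finset.Ico n (n + b + 1), dirichletKer l t) + dirichletKer (n + b + 1) t)
        = z * (z ^ (n + b) * (z - 1) ^ 2 * (∑ l ∈ Finset.Ico n (n + b + 1), dirichletKer l t))
          + ((z ^ (n + b + 1) * dirichletKer (n + b + 1) t) * (z - 1)) * (z - 1) := by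
      ring
    rw [expand, ih, shift_dirichlet, hgeom]
    ring

lemma sum_odd (r : ℕ) : ∑ l ∈ Finset.range r, (2 * l + 1) = r ^ 2 := by
  induction r with
  | zero => simp
  | succ r ih => rw [Finset.sum_range_succ, ih]; ring

lemma normSq_fact (n m : ℕ) (h : n + 1 ≤ m) (t : ℝ) :
    Complex.normSq (∑ l ∈ Finset.Ico n m, dirichletKer l t)
      = Complex.normSq (Sker (m + n) t) * Complex.normSq (Sker (m - n) t) := by
  set z := Complex.exp (Complex.I * (t : ℂ)) with hzdef
  have hz0 : z ≠ 0 := Complex.exp_ne_zero _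
  have hnormz : Complex.normSq z = 1 := by
    rw [Complex.normSq_eq_norm_sq, hzdef, mul_comm, Complex.norm_exp_ofReal_mul_I]
    norm_num
  by_cases hz1 : z = 1
  · have hd : ∀ l : ℕ, dirichletKer l t = ((2 * l + 1 : ℕ) : ℂ) := by
      intro l
      rw [dirichlet_zpow, ← hzdef, hz1]
      simp only [one_zpow, Finset.sum_const, nsmul_eq_mul, mul_one]
      rw [Int.card_Icc]
      congr 1
      omega
    have hSk : ∀ r : ℕ, Sker r t = (r : ℂ) := by
      intro r
      rw [Sker_pow, ← hzdef, hz1]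
      simp
    rw [Finset.sum_congr rfl (fun l _ => hd l), hSk, hSk]
    rw [← Nat.cast_sum]
    have hnat : ∑ l ∈ Finset.Ico n m, (2 * l + 1) = m ^ 2 - n ^ 2 := by
      have h2 := Finset.sum_range_add_sum_Ico (fun l => 2 * l + 1) (by omega : n ≤ m)
      simp only [sum_odd] at h2
      omega
    rw [hnat]
    have e1 : ∀ x : ℕ, Complex.normSq ((x : ℕ) : ℂ) = (x : ℝ) ^ 2 := by
      intro x
      rw [show ((x : ℕ) : ℂ) = (((x : ℝ)) : ℂ) by push_cast; rfl, Complex.normSq_ofReal]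
      ring
    rw [e1, e1, e1]
    have c1 : ((m ^ 2 - n ^ 2 : ℕ) : ℝ) = ((m : ℝ) + n) * ((m : ℝ) - n) := by
      have : n ^ 2 ≤ m ^ 2 := Nat.pow_le_pow_left (by omega) 2
      push_cast [Nat.cast_sub this]
      ring
    have c2 : ((m - n : ℕ) : ℝ) = (m : ℝ) - n := by
      push_cast [Nat.cast_sub (by omega : n ≤ m)]
      ring
    rw [c1, c2]
    push_cast
    ring_nf
  · obtain ⟨b, rfl⟩ : ∃ b, m = n + b + 1 := ⟨m - n - 1, by omega⟩
    have hQ := Qlem n t b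
    rw [← hzdef] at hQ
    have hgeom : ∀ r : ℕ, Sker r t * (z - 1) = z ^ r - 1 := by
      intro r
      rw [Sker_pow, ← hzdef]
      exact geom_sum_mul z r
    have e1 : n + b + 1 + n = 2 * n + b + 1 := by omega
    have e2 : n + b + 1 - n = b + 1 := by omega
    rw [e1, e2]
    have hQ2 : Complex.normSq (z ^ (n + b)) * Complex.normSq (z - 1) ^ 2
        * Complex.normSq (∑ l ∈ Finset.Ico n (n + b + 1), dirichletKer l t)
        = Complex.normSq (z ^ (2 * n + b + 1) - 1) * Complex.normSq (z ^ (b + 1) - 1) := by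
      rw [← map_pow, ← map_mul, ← map_mul, ← map_mul, hQ]
    rw [map_pow, hnormz, one_pow, one_mul] at hQ2
    rw [← hgeom, ← hgeom, map_mul, map_mul] at hQ2
    have hne : Complex.normSq (z - 1) ≠ 0 := by
      intro hc
      exact (sub_ne_zero.mpr hz1) (Complex.normSq_eq_zero.mp hc)
    apply mul_left_cancel₀ (pow_ne_zero 2 hne)
    rw [hQ2]
    ring

lemma abs_vpKer (n m : ℕ) (hmn : n + 1 ≤ m) (x : ℝ) :
    ‖vpKer n m x‖
      = (1 / ((m : ℝ) - n)) * (‖Sker (m + n) x‖ * ‖Sker (m - n) x‖) := by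
  unfold vpKer
  rw [norm_mul, norm_div, norm_one]
  have h1 : ‖(m : ℂ) - (n : ℂ)‖ = (m : ℝ) - n := by
    have hnm : (n : ℝ) ≤ m := by exact_mod_cast (by omega : n ≤ m)
    rw [show ((m : ℂ) - (n : ℂ)) = (((m : ℝ) - n : ℝ) : ℂ) by push_cast; ring]
    rw [Complex.norm_real, Real.norm_eq_abs]
    exact abs_of_nonneg (by linarith)
  rw [h1]
  congr 1
  rw [Complex.norm_def, normSq_fact n m hmn x, Real.sqrt_mul (Complex.normSq_nonneg _),
    Complex.norm_def, Complex.norm_def]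

lemma l1_bound (n N : ℕ) (hn : 1 ≤ n) (hN : 2 * n + 1 ≤ N) (t : ℝ) :
    ∑ k : Fin N, ‖vpKer n (N - n) (t - 2 * Real.pi * (k : ℝ) / N)‖
      ≤ (N : ℝ) * Real.sqrt ((N : ℝ) / ((N - 2 * n : ℕ) : ℝ)) := by
  have hmn : n + 1 ≤ N - n := by omega
  have hNpos : 0 < N := by omega
  set q : ℕ := N - 2 * n with hqdef
  have hqpos : 0 < q := by omega
  have hqN : q ≤ N := by omega
  have hmq : N - n - n = q := by omega
  have hmN : N - n + n = N := by omega
  have hqR : (0 : ℝ) < q := by exact_mod_cast hqpos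
  have hNR : (0 : ℝ) < N := by exact_mod_cast hNpos
  have hterm : ∀ k : Fin N,
      ‖vpKer n (N - n) (t - 2 * Real.pi * (k : ℝ) / N)‖
        = (1 / (q : ℝ)) * (‖Sker N (t - 2 * Real.pi * (k : ℝ) / N)‖
            * ‖Sker q (t - 2 * Real.pi * (k : ℝ) / N)‖) := by
    intro k
    rw [abs_vpKer n (N - n) hmn, hmq, hmN]
    congr 2
    push_cast [Nat.cast_sub (by omega : n ≤ N), Nat.cast_sub (by omega : 2 * n ≤ N)]
    rw [hqdef, Nat.cast_sub (by omega : 2 * n ≤ N)]; push_cast; ring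
  rw [Finset.sum_congr rfl (fun k _ => hterm k), ← Finset.mul_sum]
  set f : Fin N → ℝ := fun k => ‖Sker N (t - 2 * Real.pi * (k : ℝ) / N)‖ with hf
  set g : Fin N → ℝ := fun k => ‖Sker q (t - 2 * Real.pi * (k : ℝ) / N)‖ with hg
  have hCS := Finset.sum_mul_sq_le_sq_mul_sq Finset.univ f g
  have hf2 : ∑ k : Fin N, f k ^ 2 = (N : ℝ) * N := by
    calc ∑ k : Fin N, f k ^ 2
        = ∑ k : Fin N, Complex.normSq (Sker N (t - 2 * Real.pi * (k : ℝ) / N)) := by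
          apply Finset.sum_congr rfl; intro k _; rw [hf]; exact Complex.sq_norm _
      _ = (N : ℝ) * N := sumSq N N hNpos le_rfl t
  have hg2 : ∑ k : Fin N, g k ^ 2 = (N : ℝ) * q := by
    calc ∑ k : Fin N, g k ^ 2
        = ∑ k : Fin N, Complex.normSq (Sker q (t - 2 * Real.pi * (k : ℝ) / N)) := by
          apply Finset.sum_congr rfl; intro k _; rw [hg]; exact Complex.sq_norm _
      _ = (N : ℝ) * q := sumSq N q hNpos hqN t
  have hsum_nonneg : 0 ≤ ∑ k : Fin N, f k * g k :=
    Finset.sum_nonneg fun k _ => mul_nonneg (norm_nonneg _) (norm_nonneg _)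
  have hbound : ∑ k : Fin N, f k * g k ≤ Real.sqrt ((N : ℝ) * N * ((N : ℝ) * q)) := by
    rw [← Real.sqrt_sq hsum_nonneg]
    apply Real.sqrt_le_sqrt
    rw [← hf2, ← hg2]
    exact hCS
  calc (1 / (q : ℝ)) * ∑ k : Fin N, f k * g k
      ≤ (1 / (q : ℝ)) * Real.sqrt ((N : ℝ) * N * ((N : ℝ) * q)) := by
        apply mul_le_mul_of_nonneg_left hbound
        positivity
    _ = (N : ℝ) * Real.sqrt ((N : ℝ) / q) := by
        rw [show (N : ℝ) * N * ((N : ℝ) * q) = ((N : ℝ) * q) ^ 2 * ((N : ℝ) / q) by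
          field_simp]
        rw [Real.sqrt_mul (sq_nonneg _), Real.sqrt_sq (by positivity)]
        field_simp
    _ = (N : ℝ) * Real.sqrt ((N : ℝ) / ((N - 2 * n : ℕ) : ℝ)) := by rw [hqdef]

lemma reproduce (n N : ℕ) (hn : 1 ≤ n) (hN : 2 * n + 1 ≤ N) (j : ℤ) (hj : |j| ≤ (n : ℤ)) (θ : ℝ) :
    ∑ k : Fin N, Complex.exp (Complex.I * (j : ℂ) * ((2 * Real.pi * (k : ℝ) / N : ℝ) : ℂ))
        * vpKer n (N - n) (θ - 2 * Real.pi * (k : ℝ) / N)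
      = (N : ℂ) * Complex.exp (Complex.I * (j : ℂ) * (θ : ℂ)) := by
  set m : ℕ := N - n with hmdef
  have hmn : n + 1 ≤ m := by omega
  have hNpos : 0 < N := by omega
  set q : ℕ := N - 2 * n with hqdef
  have hqpos : 0 < q := by omega
  have hqC : ((m : ℂ) - (n : ℂ)) = (q : ℂ) := by
    push_cast [hmdef, hqdef, Nat.cast_sub (by omega : n ≤ N), Nat.cast_sub (by omega : 2 * n ≤ N)]
    ring
  have hqC0 : (q : ℂ) ≠ 0 := Nat.cast_ne_zero.mpr hqpos.ne'
  have hterm : ∀ k : Fin N,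
      Complex.exp (Complex.I * (j : ℂ) * ((2 * Real.pi * (k : ℝ) / N : ℝ) : ℂ))
          * vpKer n m (θ - 2 * Real.pi * (k : ℝ) / N)
        = (1 / (q : ℂ)) * ∑ l ∈ Finset.Ico n m, ∑ a ∈ Finset.Icc (-(l : ℤ)) (l : ℤ),
            Complex.exp (Complex.I * (a : ℂ) * (θ : ℂ))
              * Complex.exp (Complex.I * ((j + -a : ℤ) : ℂ) * ((2 * Real.pi * (k : ℝ) / N : ℝ) : ℂ)) := by
    intro k
    unfold vpKer dirichletKer
    rw [hqC]
    rw [mul_comm (Complex.exp _) _, mul_assoc]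
    congr 1
    rw [Finset.sum_mul]
    apply Finset.sum_congr rfl
    intro l _
    rw [Finset.sum_mul]
    apply Finset.sum_congr rfl
    intro a _
    rw [exp_I_sub a θ (2 * Real.pi * (k : ℝ) / N), ← exp_I_comb j (-a) (2 * Real.pi * (k : ℝ) / N)]
    ring
  rw [Finset.sum_congr rfl (fun k _ => hterm k), ← Finset.mul_sum, Finset.sum_comm]
  have step2 : ∀ l ∈ Finset.Ico n m, (∑ k : Fin N, ∑ a ∈ Finset.Icc (-(l : ℤ)) (l : ℤ),
      Complex.exp (Complex.I * (a : ℂ) * (θ : ℂ))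
        * Complex.exp (Complex.I * ((j + -a : ℤ) : ℂ) * ((2 * Real.pi * (k : ℝ) / N : ℝ) : ℂ)))
      = (N : ℂ) * Complex.exp (Complex.I * (j : ℂ) * (θ : ℂ)) := by
    intro l hl
    rw [Finset.sum_comm]
    obtain ⟨hl1, hl2⟩ := Finset.mem_Ico.mp hl
    have inner : ∀ a ∈ Finset.Icc (-(l : ℤ)) (l : ℤ),
        (∑ k : Fin N, Complex.exp (Complex.I * (a : ℂ) * (θ : ℂ))
          * Complex.exp (Complex.I * ((j + -a : ℤ) : ℂ) * ((2 * Real.pi * (k : ℝ) / N : ℝ) : ℂ)))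
        = Complex.exp (Complex.I * (a : ℂ) * (θ : ℂ))
          * (if (N : ℤ) ∣ (j + -a) then (N : ℂ) else 0) := by
      intro a _
      rw [← Finset.mul_sum, dft_sum N hNpos]
    rw [Finset.sum_congr rfl inner]
    have hjmem : j ∈ Finset.Icc (-(l : ℤ)) (l : ℤ) := by
      rw [Finset.mem_Icc]
      constructor <;> [skip; skip] <;> (rw [abs_le] at hj; omega)
    rw [Finset.sum_eq_single_of_mem j hjmem]
    · simp [mul_comm]
    · intro a ha hne
      rw [Finset.mem_Icc] at ha
      have hnd : ¬ ((N : ℤ) ∣ (j + -a)) := by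
        intro hdvd
        have habs : |j + -a| < (N : ℤ) := by
          rw [abs_le] at hj
          have hlm : (l : ℤ) < m := by exact_mod_cast hl2
          have : (m : ℤ) = (N : ℤ) - n := by
            rw [hmdef]; push_cast [Nat.cast_sub (by omega : n ≤ N)]; ring
          rw [abs_lt]
          omega
        have := dvd_small hdvd habs
        exact hne (by omega)
      rw [if_neg hnd, mul_zero]
  rw [Finset.sum_congr rfl step2, Finset.sum_const, Nat.card_Ico]
  rw [show m - n = q from by omega]
  rw [nsmul_eq_mul]
  field_simp

end Stmt13Aux

theorem stmt13 (d n N : ℕ) (hd : 1 ≤ d) (hn : 1 ≤ n) (hN : 2 * n + 1 ≤ N)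
    (p : (Fin d → ℝ) → ℝ) (hp : IsTrigPoly d n (fun θ => (p θ : ℂ)))
    (α : ℝ) (hα : α = 2 * n / N) (A B : ℝ)
    (hA : IsGreatest (Set.range fun k : Fin d → Fin N => p (trigGrid N k)) A)
    (hB : IsLeast (Set.range fun k : Fin d → Fin N => p (trigGrid N k)) B)
    (hpos : ∀ k : Fin d → Fin N, 0 < p (trigGrid N k))
    (hratio : A / B < (1 + (1 - α) ^ ((d : ℝ) / 2)) / (1 - (1 - α) ^ ((d : ℝ) / 2))) :
    ∀ θ : Fin d → ℝ, 0 < p θ := by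
  intro θ
  obtain ⟨c, hc0⟩ := hp
  have hc : ∀ t : Fin d → ℝ, ((p t : ℝ) : ℂ)
      = ∑ v ∈ Fintype.piFinset (fun _ : Fin d => Finset.Icc (-(n : ℤ)) (n : ℤ)),
          c v * Complex.exp (Complex.I * ((∑ i, (v i : ℝ) * t i : ℝ) : ℂ)) := fun t => hc0 t
  have hNpos : 0 < N := by omega
  set q : ℕ := N - 2 * n with hqdef
  have hqpos : 0 < q := by omega
  have hqR : (0 : ℝ) < q := by exact_mod_cast hqpos
  have hNR : (0 : ℝ) < N := by exact_mod_cast hNpos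
  have hqltN : q < N := by omega
  -- the product kernel
  set K : (Fin d → Fin N) → ℂ :=
    fun k => ∏ i, vpKer n (N - n) (θ i - trigGrid N k i) with hK
  -- exp of sum = product of exps
  have hexp : ∀ (v : Fin d → ℤ) (x : Fin d → ℝ),
      Complex.exp (Complex.I * ((∑ i, (v i : ℝ) * x i : ℝ) : ℂ))
        = ∏ i, Complex.exp (Complex.I * (v i : ℂ) * ((x i : ℝ) : ℂ)) := by
    intro v x
    rw [← Complex.exp_sum]
    congr 1
    push_cast
    rw [Finset.mul_sum]
    apply Finset.sum_congr rfl
    intro i _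
    ring
  -- key single-frequency multivariate identity
  have key1 : ∀ v : Fin d → ℤ, (∀ i, |v i| ≤ (n : ℤ)) →
      ∑ k : Fin d → Fin N,
          (∏ i, Complex.exp (Complex.I * (v i : ℂ) * ((trigGrid N k i : ℝ) : ℂ))) * K k
        = (N : ℂ) ^ d * ∏ i, Complex.exp (Complex.I * (v i : ℂ) * ((θ i : ℝ) : ℂ)) := by
    intro v hv
    have hfac : ∀ k : Fin d → Fin N,
        (∏ i, Complex.exp (Complex.I * (v i : ℂ) * ((trigGrid N k i : ℝ) : ℂ))) * K k
          = ∏ i, (Complex.exp (Complex.I * (v i : ℂ) * ((trigGrid N k i : ℝ) : ℂ))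
              * vpKer n (N - n) (θ i - trigGrid N k i)) := by
      intro k
      rw [hK, ← Finset.prod_mul_distrib]
    rw [Finset.sum_congr rfl (fun k _ => hfac k)]
    have hfactor := Finset.prod_univ_sum (fun _ : Fin d => (Finset.univ : Finset (Fin N)))
      (fun i x => Complex.exp (Complex.I * (v i : ℂ) * ((2 * Real.pi * (x : ℝ) / N : ℝ) : ℂ))
        * vpKer n (N - n) (θ i - 2 * Real.pi * (x : ℝ) / N))
    rw [Fintype.piFinset_univ] at hfactor
    simp only [trigGrid]
    rw [← hfactor]
    calc ∏ i : Fin d, ∑ x : Fin N,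
          Complex.exp (Complex.I * (v i : ℂ) * ((2 * Real.pi * (x : ℝ) / N : ℝ) : ℂ))
            * vpKer n (N - n) (θ i - 2 * Real.pi * (x : ℝ) / N)
        = ∏ i : Fin d, ((N : ℂ) * Complex.exp (Complex.I * (v i : ℂ) * ((θ i : ℝ) : ℂ))) :=
          Finset.prod_congr rfl fun i _ => Stmt13Aux.reproduce n N hn hN (v i) (hv i) (θ i)
      _ = (N : ℂ) ^ d * ∏ i, Complex.exp (Complex.I * (v i : ℂ) * ((θ i : ℝ) : ℂ)) := by
          rw [Finset.prod_mul_distrib, Finset.prod_const, Finset.card_univ, Fintype.card_fin]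
  -- full reproduction identity
  have hrepro : ∑ k : Fin d → Fin N, ((p (trigGrid N k) : ℝ) : ℂ) * K k
      = (N : ℂ) ^ d * ((p θ : ℝ) : ℂ) := by
    have hterm : ∀ k : Fin d → Fin N, ((p (trigGrid N k) : ℝ) : ℂ) * K k
        = ∑ v ∈ Fintype.piFinset (fun _ : Fin d => Finset.Icc (-(n : ℤ)) (n : ℤ)),
            c v * ((∏ i, Complex.exp (Complex.I * (v i : ℂ) * ((trigGrid N k i : ℝ) : ℂ))) * K k) := by
      intro k
      rw [hc (trigGrid N k), Finset.sum_mul]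
      apply Finset.sum_congr rfl
      intro v _
      rw [hexp v (trigGrid N k)]
      ring
    rw [Finset.sum_congr rfl (fun k _ => hterm k), Finset.sum_comm]
    have hv : ∀ v ∈ Fintype.piFinset (fun _ : Fin d => Finset.Icc (-(n : ℤ)) (n : ℤ)),
        ∑ k : Fin d → Fin N,
          c v * ((∏ i, Complex.exp (Complex.I * (v i : ℂ) * ((trigGrid N k i : ℝ) : ℂ))) * K k)
        = c v * ((N : ℂ) ^ d * ∏ i, Complex.exp (Complex.I * (v i : ℂ) * ((θ i : ℝ) : ℂ))) := by
      intro v hvmem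
      rw [← Finset.mul_sum]
      congr 1
      apply key1
      intro i
      have := (Fintype.mem_piFinset.mp hvmem) i
      rw [Finset.mem_Icc] at this
      rw [abs_le]
      omega
    rw [Finset.sum_congr rfl hv]
    rw [hc θ, Finset.mul_sum]
    apply Finset.sum_congr rfl
    intro v _
    rw [hexp v θ]
    ring
  -- sum of kernel values
  have hK1 : ∑ k : Fin d → Fin N, K k = (N : ℂ) ^ d := by
    have := key1 (fun _ => 0) (fun i => by simp)
    simpa using this
  -- bound on the absolute sum
  set C : ℝ := Real.sqrt ((N : ℝ) / q) ^ d with hC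
  have habsK : ∀ k : Fin d → Fin N, ‖K k‖
      = ∏ i, ‖vpKer n (N - n) (θ i - trigGrid N k i)‖ := by
    intro k
    rw [hK]
    exact Complex.norm_prod _ _
  have hSA : ∑ k : Fin d → Fin N, ‖K k‖ ≤ (N : ℝ) ^ d * C := by
    rw [Finset.sum_congr rfl (fun k _ => habsK k)]
    have hfactor := Finset.prod_univ_sum (fun _ : Fin d => (Finset.univ : Finset (Fin N)))
      (fun i x => ‖vpKer n (N - n) (θ i - 2 * Real.pi * (x : ℝ) / N)‖)
    rw [Fintype.piFinset_univ] at hfactor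
    simp only [trigGrid]
    rw [← hfactor]
    calc ∏ i : Fin d, ∑ x : Fin N,
          ‖vpKer n (N - n) (θ i - 2 * Real.pi * (x : ℝ) / N)‖
        ≤ ∏ i : Fin d, ((N : ℝ) * Real.sqrt ((N : ℝ) / q)) := by
          apply Finset.prod_le_prod
          · intro i _
            exact Finset.sum_nonneg fun x _ => norm_nonneg _
          · intro i _
            exact Stmt13Aux.l1_bound n N hn hN (θ i)
      _ = (N : ℝ) ^ d * C := by
          rw [Finset.prod_const, Finset.card_univ, Fintype.card_fin, mul_pow, hC]
  -- real part of the reproduction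
  have hre : (p θ) * (N : ℝ) ^ d = ∑ k : Fin d → Fin N, p (trigGrid N k) * (K k).re := by
    have h1 : ((N : ℂ) ^ d * ((p θ : ℝ) : ℂ)).re = (N : ℝ) ^ d * p θ := by
      rw [show ((N : ℂ) ^ d) = (((N : ℝ) ^ d : ℝ) : ℂ) by push_cast; ring]
      rw [Complex.re_ofReal_mul, Complex.ofReal_re]
    have h2 : (∑ k : Fin d → Fin N, ((p (trigGrid N k) : ℝ) : ℂ) * K k).re
        = ∑ k : Fin d → Fin N, p (trigGrid N k) * (K k).re := by
      rw [Complex.re_sum]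
      exact Finset.sum_congr rfl fun k _ => Complex.re_ofReal_mul _ _
    rw [← h2, hrepro, h1, mul_comm]
  have hreK : ∑ k : Fin d → Fin N, (K k).re = (N : ℝ) ^ d := by
    have : (∑ k : Fin d → Fin N, K k).re = ((N : ℂ) ^ d).re := by rw [hK1]
    rw [Complex.re_sum] at this
    rw [this, show ((N : ℂ) ^ d) = (((N : ℝ) ^ d : ℝ) : ℂ) by push_cast; ring, Complex.ofReal_re]
  -- elementary facts about A and B
  have hBA : B ≤ A := hB.2 hA.1
  have hBpos : 0 < B := by
    obtain ⟨k0, hk0⟩ := hB.1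
    rw [← hk0]
    exact hpos k0
  -- pointwise lower bound
  have hptwise : ∀ k : Fin d → Fin N,
      B * (K k).re - (A - B) * ((‖K k‖ - (K k).re) / 2)
        ≤ p (trigGrid N k) * (K k).re := by
    intro k
    have hxa := Complex.abs_re_le_norm (K k)
    rw [abs_le] at hxa
    have h1 : B ≤ p (trigGrid N k) := hB.2 ⟨k, rfl⟩
    have h2 : p (trigGrid N k) ≤ A := hA.2 ⟨k, rfl⟩
    rcases le_or_gt 0 ((K k).re) with hx | hx
    · nlinarith [hxa.1, hxa.2]
    · nlinarith [hxa.1, hxa.2]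
  set Nd : ℝ := (N : ℝ) ^ d with hNd
  have hNdpos : 0 < Nd := by rw [hNd]; positivity
  set SA : ℝ := ∑ k : Fin d → Fin N, ‖K k‖ with hSAdef
  -- sum the pointwise bound
  have hsum : B * Nd - (A - B) * ((SA - Nd) / 2) ≤ p θ * Nd := by
    rw [hre]
    have e1 : ∑ k : Fin d → Fin N,
        (B * (K k).re - (A - B) * ((‖K k‖ - (K k).re) / 2))
        = B * (∑ k : Fin d → Fin N, (K k).re)
          - (A - B) * (((∑ k : Fin d → Fin N, ‖K k‖)
              - (∑ k : Fin d → Fin N, (K k).re)) / 2) := by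
      rw [Finset.sum_sub_distrib, ← Finset.mul_sum, ← Finset.mul_sum, ← Finset.sum_div,
        Finset.sum_sub_distrib]
    calc B * Nd - (A - B) * ((SA - Nd) / 2)
        = ∑ k : Fin d → Fin N,
            (B * (K k).re - (A - B) * ((‖K k‖ - (K k).re) / 2)) := by
          rw [e1, hreK]
      _ ≤ ∑ k : Fin d → Fin N, p (trigGrid N k) * (K k).re :=
          Finset.sum_le_sum fun k _ => hptwise k
  -- relate β and C
  set β : ℝ := (1 - α) ^ ((d : ℝ) / 2) with hβ
  have h1α : 1 - α = (q : ℝ) / N := by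
    rw [hα, hqdef]
    push_cast [Nat.cast_sub (by omega : 2 * n ≤ N)]
    field_simp
  have hβsqrt : β = Real.sqrt ((q : ℝ) / N) ^ d := by
    rw [hβ, h1α, Real.sqrt_eq_rpow, ← Real.rpow_natCast (((q : ℝ) / N) ^ ((1:ℝ)/2)) d,
      ← Real.rpow_mul (by positivity)]
    congr 1
    ring
  have hβC : β * C = 1 := by
    rw [hβsqrt, hC, ← mul_pow, ← Real.sqrt_mul (by positivity),
      show (q : ℝ) / N * ((N : ℝ) / q) = 1 by field_simp, Real.sqrt_one, one_pow]
  have hβpos : 0 < β := by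
    rw [hβsqrt]
    apply pow_pos
    apply Real.sqrt_pos.mpr
    positivity
  have hβlt1 : β < 1 := by
    rw [hβsqrt]
    apply pow_lt_one₀ (Real.sqrt_nonneg _) _ (by omega)
    rw [show (1:ℝ) = Real.sqrt 1 by simp [Real.sqrt_one]]
    apply Real.sqrt_lt_sqrt (by positivity)
    rw [div_lt_one hNR]
    exact_mod_cast hqltN
  have hratio2 : A * (1 - β) < (1 + β) * B := by
    rw [div_lt_div_iff₀ hBpos (by linarith : (0:ℝ) < 1 - β)] at hratio
    linarith [hratio]
  have hAB2 : (A - B) * (1 - β) < 2 * β * B := by linarith only [hratio2]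
  have hCm1 : (A - B) * (C - 1) < 2 * B := by
    have h3 : (A - B) * (C - 1) * β = (A - B) * (1 - β) := by
      linear_combination (A - B) * hβC
    apply lt_of_mul_lt_mul_right _ hβpos.le
    calc (A - B) * (C - 1) * β = (A - B) * (1 - β) := h3
      _ < 2 * β * B := hAB2
      _ = 2 * B * β := by ring
  have hfinal : 0 < B * Nd - (A - B) * ((SA - Nd) / 2) := by
    have t1 : (A - B) * (SA - Nd) ≤ (A - B) * (Nd * C - Nd) :=
      mul_le_mul_of_nonneg_left (by linarith [hSA]) (by linarith [hBA])
    have t2 : (A - B) * (C - 1) * Nd < 2 * B * Nd :=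
      mul_lt_mul_of_pos_right hCm1 hNdpos
    have t3 : (A - B) * (Nd * C - Nd) = (A - B) * (C - 1) * Nd := by ring
    linarith only [t1, t2, t3]
  have hp2 : 0 < p θ * Nd := lt_of_lt_of_le hfinal hsum
  by_contra hle
  push_neg at hle
  have hnp : p θ * Nd ≤ 0 := mul_nonpos_iff.mpr (Or.inr ⟨hle, hNdpos.le⟩)
  exact absurd hp2 (not_lt.mpr hnp)
end
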